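/- arXiv:2401.16954 — 4 statements merged into one kernel-verified Lean document; each statement's English description precedes it below -/
import Mathlib

section
/- Let ν_y and ν_x be probability measures on ℝ × {0,1} (the conditional laws of (T, δ) given X = y and X = x). Then Φ(y,t,x) := ∫ ξ_x(s,d,t) dν_y(s,d) = ∫_{(0,t]} dH¹_y(v)/(1 − H_x(v)) − ∫_{(0,t]} (1 − H_y(v)) dH¹_x(v)/(1 − H_x(v))². In particular, taking ν_y = ν_x, Φ(x,t,x) = 0 for every t ≥ 0. -/
open MeasureTheory Set

namespace Stmt3

/-- First-coordinate distribution function `H_ν(t) = ν((-∞,t] × {0,1})`. -/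
noncomputable def Hd (ν : Measure (ℝ × Bool)) (t : ℝ) : ℝ :=
  (ν (Iic t ×ˢ (univ : Set Bool))).toReal

/-- Subdistribution function `H¹_ν(t) = ν((-∞,t] × {1})`. -/
noncomputable def H1d (ν : Measure (ℝ × Bool)) (t : ℝ) : ℝ :=
  (ν (Iic t ×ˢ ({true} : Set Bool))).toReal

/-- Lebesgue–Stieltjes measure of `H¹_ν`: first marginal of `ν` restricted to `δ = 1`. -/
noncomputable def H1m (ν : Measure (ℝ × Bool)) : Measure ℝ :=
  Measure.map Prod.fst (ν.restrict {q : ℝ × Bool | q.2 = true})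

variable (ν : Measure (ℝ × Bool)) [IsProbabilityMeasure ν]

lemma msetD : MeasurableSet {q : ℝ × Bool | q.2 = true} :=
  (measurable_snd (measurableSet_singleton true))

lemma H1m_apply {s : Set ℝ} (hs : MeasurableSet s) :
    H1m ν s = ν (s ×ˢ ({true} : Set Bool)) := by
  rw [H1m, Measure.map_apply measurable_fst hs, Measure.restrict_apply (measurable_fst hs)]
  congr 1

instance : IsFiniteMeasure (H1m ν) := by
  constructor
  rw [H1m_apply ν MeasurableSet.univ]
  exact lt_of_le_of_lt (measure_mono (subset_univ _)) (measure_lt_top ν univ)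

lemma Hd_mono : Monotone (Hd ν) := by
  intro a b hab
  exact ENNReal.toReal_mono (measure_ne_top ν _)
    (measure_mono (prod_mono_left (Iic_subset_Iic.2 hab)))

lemma Hd_le_one (s : ℝ) : Hd ν s ≤ 1 := by
  rw [Hd]
  exact ENNReal.toReal_le_of_le_ofReal one_pos.le (by simpa using prob_le_one (μ := ν))

lemma marginal_atom (hc : Continuous (Hd ν)) (u : ℝ) :
    ν ({u} ×ˢ (univ : Set Bool)) = 0 := by
  have hIio : (Iio u ×ˢ (univ : Set Bool)) = ⋃ n : ℕ, Iic (u - 1/(n+1)) ×ˢ (univ : Set Bool) := by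
    ext q
    simp only [mem_prod, mem_Iio, mem_univ, and_true, mem_iUnion, mem_Iic]
    constructor
    · intro h
      obtain ⟨n, hn⟩ := exists_nat_one_div_lt (sub_pos.2 h)
      exact ⟨n, by linarith⟩
    · rintro ⟨n, hn⟩
      have : (0:ℝ) < 1/(n+1) := by positivity
      linarith
  have hmono : Monotone (fun n : ℕ => Iic (u - 1/(n+1)) ×ˢ (univ : Set Bool)) := by
    intro m n hmn
    apply prod_mono_left
    apply Iic_subset_Iic.2
    have : (1:ℝ)/(n+1) ≤ 1/(m+1) := by
      apply div_le_div_of_nonneg_left one_pos.le (by positivity)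
      exact_mod_cast by exact_mod_cast add_le_add_left (Nat.cast_le.2 hmn) 1
    linarith
  have htend := tendsto_measure_iUnion_atTop (μ := ν) hmono
  rw [← hIio] at htend
  have htoReal : Filter.Tendsto (fun n : ℕ => Hd ν (u - 1/(n+1))) Filter.atTop
      (nhds ((ν (Iio u ×ˢ (univ : Set Bool))).toReal)) := by
    exact (ENNReal.tendsto_toReal (measure_ne_top ν _)).comp htend
  have harg : Filter.Tendsto (fun n : ℕ => u - 1/((n:ℝ)+1)) Filter.atTop (nhds u) := by
    have := tendsto_one_div_add_atTop_nhds_zero_nat (𝕜 := ℝ)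
    have h2 := Filter.Tendsto.const_sub u this
    simpa using h2
  have htoReal2 : Filter.Tendsto (fun n : ℕ => Hd ν (u - 1/(n+1))) Filter.atTop
      (nhds (Hd ν u)) := (hc.tendsto u).comp harg
  have heq : (ν (Iio u ×ˢ (univ : Set Bool))).toReal = Hd ν u :=
    tendsto_nhds_unique htoReal htoReal2
  have hsplit : (Iic u ×ˢ (univ : Set Bool)) = (Iio u ×ˢ (univ : Set Bool)) ∪ ({u} ×ˢ (univ : Set Bool)) := by
    rw [← union_prod]
    congr 1
    exact Iio_union_right.symm
  have hdisj : Disjoint (Iio u ×ˢ (univ : Set Bool)) ({u} ×ˢ (univ : Set Bool)) :=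
    Set.disjoint_prod.2 (Or.inl (by simp [Set.disjoint_left]; exact fun a h => ne_of_lt h))
  have hmeas : MeasurableSet ({u} ×ˢ (univ : Set Bool)) :=
    (measurableSet_singleton u).prod MeasurableSet.univ
  have hU := measure_union (μ := ν) hdisj hmeas
  rw [← hsplit] at hU
  have h1 : (ν (Iic u ×ˢ (univ : Set Bool))).toReal
      = (ν (Iio u ×ˢ (univ : Set Bool))).toReal + (ν ({u} ×ˢ (univ : Set Bool))).toReal := by
    rw [hU, ENNReal.toReal_add (measure_ne_top ν _) (measure_ne_top ν _)]
  have h2 : (ν ({u} ×ˢ (univ : Set Bool))).toReal = 0 := by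
    have : (ν (Iic u ×ˢ (univ : Set Bool))).toReal = Hd ν u := rfl
    linarith
  exact Or.resolve_right ((ENNReal.toReal_eq_zero_iff _).1 h2) (measure_ne_top ν _)



lemma measure_Iio_prod (hc : Continuous (Hd ν)) (u : ℝ) :
    ν (Iio u ×ˢ (univ : Set Bool)) = ν (Iic u ×ˢ (univ : Set Bool)) := by
  apply le_antisymm (measure_mono (prod_mono_left Iio_subset_Iic_self))
  have hsplit : (Iic u ×ˢ (univ : Set Bool))
      = (Iio u ×ˢ (univ : Set Bool)) ∪ ({u} ×ˢ (univ : Set Bool)) := by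
    rw [← union_prod]; congr 1; exact Iio_union_right.symm
  calc ν (Iic u ×ˢ (univ : Set Bool))
      ≤ ν (Iio u ×ˢ (univ : Set Bool)) + ν ({u} ×ˢ (univ : Set Bool)) := by
        rw [hsplit]; exact measure_union_le _ _
    _ = ν (Iio u ×ˢ (univ : Set Bool)) := by rw [marginal_atom ν hc u, add_zero]

lemma prob_ge (hc : Continuous (Hd ν)) (u : ℝ) :
    (ν {q : ℝ × Bool | u ≤ q.1}).toReal = 1 - Hd ν u := by
  have hset : {q : ℝ × Bool | u ≤ q.1} = (Iio u ×ˢ (univ : Set Bool))ᶜ := by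
    ext q; simp [not_lt]
  have hm : MeasurableSet (Iio u ×ˢ (univ : Set Bool)) :=
    measurableSet_Iio.prod MeasurableSet.univ
  rw [hset, measure_compl hm (measure_ne_top ν _), measure_univ,
    measure_Iio_prod ν hc u, ENNReal.toReal_sub_of_le (prob_le_one) ENNReal.one_ne_top]
  simp [Hd]

lemma Hd_zero_eq (hc : Continuous (Hd ν)) (hsupp : ν {q : ℝ × Bool | q.1 < 0} = 0) :
    ν (Iic 0 ×ˢ (univ : Set Bool)) = 0 := by
  rw [← measure_Iio_prod ν hc 0]
  apply measure_mono_null _ hsupp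
  intro q hq
  exact hq.1

lemma H1m_Iic_zero (hc : Continuous (Hd ν)) (hsupp : ν {q : ℝ × Bool | q.1 < 0} = 0) :
    H1m ν (Iic 0) = 0 := by
  rw [H1m_apply ν measurableSet_Iic]
  apply measure_mono_null _ (Hd_zero_eq ν hc hsupp)
  exact prod_mono_right (subset_univ _)

/-- `ξ_x(s,d,t) = 1{s ≤ t, d = 1}/(1-H_x(s)) - ∫_{(0,t]} 1{u ≤ s} dH¹_x(u)/(1-H_x(u))²`. -/
noncomputable def xi (νx : Measure (ℝ × Bool)) (t s : ℝ) (d : Bool) : ℝ :=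
  (if s ≤ t ∧ d = true then 1 else 0) / (1 - Hd νx s) -
    ∫ u in Ioc 0 t, (if u ≤ s then 1 else 0) / (1 - Hd νx u) ^ 2 ∂(H1m νx)

lemma Phi_aux (νx νy : Measure (ℝ × Bool))
    [IsProbabilityMeasure νx] [IsProbabilityMeasure νy]
    (hHxc : Continuous (Hd νx)) (hHyc : Continuous (Hd νy))
    (hsuppy : νy {q : ℝ × Bool | q.1 < 0} = 0)
    (t : ℝ) (ht : 0 ≤ t)
    (θ : ℝ) (hθ : 0 < θ) (hθle : ∀ s ∈ Icc (0 : ℝ) t, θ ≤ 1 - Hd νx s) :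
    (∫ q, xi νx t q.1 q.2 ∂νy) =
      (∫ v in Ioc 0 t, (1 - Hd νx v)⁻¹ ∂(H1m νy)) -
        (∫ v in Ioc 0 t, (1 - Hd νy v) / (1 - Hd νx v) ^ 2 ∂(H1m νx)) := by
  have hθt : ∀ s, s ≤ t → θ ≤ 1 - Hd νx s := by
    intro s hs
    rcases le_or_gt 0 s with h0 | h0
    · exact hθle s ⟨h0, hs⟩
    · have h1 := hθle 0 ⟨le_refl 0, ht⟩
      have h2 := Hd_mono νx h0.le
      linarith
  have hmf : Measurable (fun s => (1 - Hd νx s)⁻¹) :=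
    (measurable_const.sub hHxc.measurable).inv
  -- the function g' : bounded version of (1 - Hd νx u)^(-2)
  set g : ℝ → ℝ := fun u => (((1 : ℝ) - Hd νx (min u t)) ^ 2)⁻¹ with hg
  have hgm : Measurable g :=
    (((measurable_const.sub (hHxc.measurable.comp (measurable_id.min measurable_const))).pow
      measurable_const)).inv
  have hgnn : ∀ u, 0 ≤ g u := fun u => by positivity
  have hgbd : ∀ u, g u ≤ (θ ^ 2)⁻¹ := by
    intro u
    have h1 : θ ≤ 1 - Hd νx (min u t) := hθt _ (min_le_right u t)
    have : θ ^ 2 ≤ (1 - Hd νx (min u t)) ^ 2 := by nlinarith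
    exact inv_anti₀ (by positivity) this
  -- first term as indicator function
  set A : Set (ℝ × Bool) := Iic t ×ˢ ({true} : Set Bool) with hA
  have hAm : MeasurableSet A := measurableSet_Iic.prod (measurableSet_singleton true)
  have hF1 : ∀ q : ℝ × Bool,
      (if q.1 ≤ t ∧ q.2 = true then 1 else 0) / (1 - Hd νx q.1)
        = A.indicator (fun q : ℝ × Bool => (1 - Hd νx q.1)⁻¹) q := by
    intro q
    by_cases h : q.1 ≤ t ∧ q.2 = true
    · rw [if_pos h, Set.indicator_of_mem (show q ∈ A from ⟨h.1, h.2⟩), one_div]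
    · rw [if_neg h, Set.indicator_of_notMem (show q ∉ A from fun hm => h ⟨hm.1, hm.2⟩), zero_div]
  have hintF1 : Integrable
      (fun q : ℝ × Bool => (if q.1 ≤ t ∧ q.2 = true then 1 else 0) / (1 - Hd νx q.1)) νy := by
    refine ⟨?_, ?_⟩
    · simp only [hF1]
      exact ((hmf.comp measurable_fst).indicator hAm).aestronglyMeasurable
    · apply HasFiniteIntegral.of_bounded (C := θ⁻¹)
      apply ae_of_all
      intro q
      rw [hF1]
      rw [Real.norm_eq_abs]
      by_cases h : q ∈ A
      · rw [Set.indicator_of_mem h]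
        have hq1 : q.1 ≤ t := h.1
        have hb := hθt q.1 hq1
        rw [abs_of_nonneg (inv_nonneg.2 (by linarith))]
        exact inv_anti₀ hθ hb
      · rw [Set.indicator_of_notMem h]
        simp [inv_nonneg, hθ.le]
  -- kernel integrand and its properties
  set μt : Measure ℝ := (H1m νx).restrict (Ioc 0 t) with hμt
  have hker_meas : ∀ s : ℝ, Measurable (fun u => (if u ≤ s then 1 else 0) * g u) := by
    intro s
    exact (Measurable.ite measurableSet_Iic measurable_const measurable_const).mul hgm
  have hker_bd : ∀ s u : ℝ, ‖(if u ≤ s then 1 else 0) * g u‖ ≤ (θ ^ 2)⁻¹ := by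
    intro s u
    rw [Real.norm_eq_abs]
    rcases le_or_gt u s with h | h
    · rw [if_pos h, one_mul, abs_of_nonneg (hgnn u)]
      exact hgbd u
    · rw [if_neg (not_le.2 h), zero_mul, abs_zero]
      positivity
  have hker_int : ∀ s : ℝ, Integrable (fun u => (if u ≤ s then 1 else 0) * g u) μt :=
    fun s => ⟨(hker_meas s).aestronglyMeasurable,
      HasFiniteIntegral.of_bounded (ae_of_all _ (hker_bd s))⟩
  set G : ℝ → ℝ := fun s => ∫ u, (if u ≤ s then 1 else 0) * g u ∂μt with hG
  have hGmono : Monotone G := by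
    intro a b hab
    apply integral_mono (hker_int a) (hker_int b)
    intro u
    apply mul_le_mul_of_nonneg_right _ (hgnn u)
    rcases le_or_gt u a with h | h
    · rw [if_pos h, if_pos (h.trans hab)]
    · rw [if_neg (not_le.2 h)]
      split <;> norm_num
  have hGbd : ∀ s, ‖G s‖ ≤ (θ ^ 2)⁻¹ * (μt univ).toReal := fun s =>
    norm_integral_le_of_norm_le_const (ae_of_all _ (hker_bd s))
  -- G agrees with the inner integral of xi
  have hGeq : ∀ s : ℝ,
      (∫ u in Ioc 0 t, (if u ≤ s then 1 else 0) / (1 - Hd νx u) ^ 2 ∂(H1m νx)) = G s := by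
    intro s
    apply setIntegral_congr_fun measurableSet_Ioc
    intro u hu
    have hmin : min u t = u := min_eq_left hu.2
    simp only [hg, hmin, div_eq_mul_inv]
  have hintG : Integrable (fun q : ℝ × Bool => G q.1) νy :=
    ⟨((hGmono.measurable).comp measurable_fst).aestronglyMeasurable,
      HasFiniteIntegral.of_bounded (ae_of_all _ (fun q => hGbd q.1))⟩
  -- split the integral
  have hxi : (fun q : ℝ × Bool => xi νx t q.1 q.2)
      = fun q : ℝ × Bool =>
        (if q.1 ≤ t ∧ q.2 = true then 1 else 0) / (1 - Hd νx q.1) - G q.1 := by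
    funext q
    rw [xi, hGeq q.1]
  rw [hxi, integral_sub hintF1 hintG]
  -- first integral
  have hI1 : (∫ q, (if q.1 ≤ t ∧ q.2 = true then 1 else 0) / (1 - Hd νx q.1) ∂νy)
      = ∫ v in Ioc 0 t, (1 - Hd νx v)⁻¹ ∂(H1m νy) := by
    have hae : Iic t =ᵐ[H1m νy] Ioc 0 t := by
      rw [MeasureTheory.ae_eq_set]
      constructor
      · apply measure_mono_null _ (H1m_Iic_zero νy hHyc hsuppy)
        intro x hx
        simp only [mem_diff, mem_Iic, mem_Ioc, not_and] at hx ⊢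
        rcases le_or_gt x 0 with h | h
        · exact h
        · exact absurd (hx.2 h) (by simp [hx.1])
      · apply measure_mono_null _ (H1m_Iic_zero νy hHyc hsuppy)
        intro x hx
        exact absurd hx.1.2 hx.2
    calc (∫ q, (if q.1 ≤ t ∧ q.2 = true then 1 else 0) / (1 - Hd νx q.1) ∂νy)
        = ∫ q, A.indicator (fun q : ℝ × Bool => (1 - Hd νx q.1)⁻¹) q ∂νy := by
          simp only [hF1]
      _ = ∫ q in A, (1 - Hd νx q.1)⁻¹ ∂νy := integral_indicator hAm
      _ = ∫ q in Prod.fst ⁻¹' Iic t, (1 - Hd νx q.1)⁻¹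
            ∂(νy.restrict {q : ℝ × Bool | q.2 = true}) := by
          rw [Measure.restrict_restrict (measurable_fst measurableSet_Iic)]
          rfl
      _ = ∫ v in Iic t, (1 - Hd νx v)⁻¹ ∂(H1m νy) :=
          (setIntegral_map measurableSet_Iic hmf.aestronglyMeasurable
            measurable_fst.aemeasurable).symm
      _ = ∫ v in Ioc 0 t, (1 - Hd νx v)⁻¹ ∂(H1m νy) := by
          rw [Measure.restrict_congr_set hae]
  -- second integral via Fubini
  have hI2 : (∫ q, G q.1 ∂νy)
      = ∫ v in Ioc 0 t, (1 - Hd νy v) / (1 - Hd νx v) ^ 2 ∂(H1m νx) := by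
    have hFint : Integrable
        (Function.uncurry fun (q : ℝ × Bool) (u : ℝ) => (if u ≤ q.1 then 1 else 0) * g u)
        (νy.prod μt) := by
      constructor
      · apply Measurable.aestronglyMeasurable
        apply Measurable.mul _ (hgm.comp measurable_snd)
        exact Measurable.ite
          (measurableSet_le measurable_snd (measurable_fst.comp measurable_fst))
          measurable_const measurable_const
      · apply HasFiniteIntegral.of_bounded (C := (θ ^ 2)⁻¹)
        apply ae_of_all
        rintro ⟨q, u⟩
        exact hker_bd q.1 u
    have hswap := integral_integral_swap hFint
    have hinner : ∀ u : ℝ,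
        (∫ q : ℝ × Bool, (if u ≤ q.1 then 1 else 0) * g u ∂νy) = (1 - Hd νy u) * g u := by
      intro u
      rw [integral_mul_const]
      congr 1
      have hmeasS : MeasurableSet {q : ℝ × Bool | u ≤ q.1} :=
        measurableSet_le measurable_const measurable_fst
      have hind : (fun q : ℝ × Bool => if u ≤ q.1 then (1:ℝ) else 0)
          = Set.indicator {q : ℝ × Bool | u ≤ q.1} (fun _ => (1:ℝ)) := by
        funext q
        by_cases h : u ≤ q.1 <;> simp [Set.indicator_apply, h]
      rw [hind, integral_indicator hmeasS, setIntegral_const, smul_eq_mul, mul_one]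
      exact prob_ge νy hHyc u
    calc (∫ q, G q.1 ∂νy) = ∫ u, (1 - Hd νy u) * g u ∂μt := by
          rw [hswap]
          exact integral_congr_ae (ae_of_all _ hinner)
      _ = ∫ v in Ioc 0 t, (1 - Hd νy v) / (1 - Hd νx v) ^ 2 ∂(H1m νx) := by
          apply setIntegral_congr_fun measurableSet_Ioc
          intro u hu
          have hmin : min u t = u := min_eq_left hu.2
          simp only [hg, hmin, div_eq_mul_inv, mul_comm]
  rw [hI1, hI2]

/-- Lemma 1: `Φ(y,t,x) = ∫ ξ_x dν_y
= ∫_{(0,t]} dH¹_y/(1-H_x) - ∫_{(0,t]} (1-H_y) dH¹_x/(1-H_x)²`;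
in particular, with `ν_y = ν_x`, `Φ(x,t,x) = 0`. -/
theorem Phi_formula (νx νy : Measure (ℝ × Bool))
    [IsProbabilityMeasure νx] [IsProbabilityMeasure νy]
    (hHxc : Continuous (Hd νx)) (hHyc : Continuous (Hd νy))
    (hH1xc : Continuous (H1d νx)) (hH1yc : Continuous (H1d νy))
    (hsuppx : νx {q : ℝ × Bool | q.1 < 0} = 0)
    (hsuppy : νy {q : ℝ × Bool | q.1 < 0} = 0)
    (t : ℝ) (ht : 0 ≤ t)
    (θ : ℝ) (hθ : 0 < θ) (hθle : ∀ s ∈ Icc (0 : ℝ) t, θ ≤ 1 - Hd νx s) :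
    (∫ q, xi νx t q.1 q.2 ∂νy) =
      (∫ v in Ioc 0 t, (1 - Hd νx v)⁻¹ ∂(H1m νy)) -
        (∫ v in Ioc 0 t, (1 - Hd νy v) / (1 - Hd νx v) ^ 2 ∂(H1m νx)) ∧
    (∫ q, xi νx t q.1 q.2 ∂νx) = 0 := by
  refine ⟨Phi_aux νx νy hHxc hHyc hsuppy t ht θ hθ hθle, ?_⟩
  rw [Phi_aux νx νx hHxc hHxc hsuppx t ht θ hθ hθle, sub_eq_zero]
  apply setIntegral_congr_fun measurableSet_Ioc
  intro v hv
  have h1 := hθle v ⟨hv.1.le, hv.2⟩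
  have hne : (1 : ℝ) - Hd νx v ≠ 0 := ne_of_gt (lt_of_lt_of_le hθ h1)
  field_simp


end Stmt3
end

section
/- Let ν_x be a probability measure on ℝ × {0,1} (the conditional law of (T, δ) given X = x). Then Φ₁(x,t,x) := ∫ ξ_x(s,d,t)² dν_x(s,d) = ∫_{(0,t]} dH¹_x(v)/(1 − H_x(v))². -/
open MeasureTheory Set

namespace Stmt4

/-- First-coordinate distribution function `H_ν(t) = ν((-∞,t] × {0,1})`. -/
noncomputable def Hd (ν : Measure (ℝ × Bool)) (t : ℝ) : ℝ :=
  (ν (Iic t ×ˢ (univ : Set Bool))).toReal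

/-- Subdistribution function `H¹_ν(t) = ν((-∞,t] × {1})`. -/
noncomputable def H1d (ν : Measure (ℝ × Bool)) (t : ℝ) : ℝ :=
  (ν (Iic t ×ˢ ({true} : Set Bool))).toReal

/-- Lebesgue–Stieltjes measure of `H¹_ν`: first marginal of `ν` restricted to `δ = 1`. -/
noncomputable def H1m (ν : Measure (ℝ × Bool)) : Measure ℝ :=
  Measure.map Prod.fst (ν.restrict {q : ℝ × Bool | q.2 = true})

/-- `ξ_x(s,d,t) = 1{s ≤ t, d = 1}/(1-H_x(s)) - ∫_{(0,t]} 1{u ≤ s} dH¹_x(u)/(1-H_x(u))²`. -/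
noncomputable def xi (νx : Measure (ℝ × Bool)) (t s : ℝ) (d : Bool) : ℝ :=
  (if s ≤ t ∧ d = true then 1 else 0) / (1 - Hd νx s) -
    ∫ u in Ioc 0 t, (if u ≤ s then 1 else 0) / (1 - Hd νx u) ^ 2 ∂(H1m νx)

/-- A finite measure on `ℝ` whose distribution function is continuous has no atoms. -/
private lemma null_singleton_of_cont (m : Measure ℝ) [IsFiniteMeasure m]
    (hc : Continuous fun s => (m (Iic s)).toReal) (a : ℝ) : m {a} = 0 := by
  set F := fun s => (m (Iic s)).toReal with hF
  have key : ∀ b < a, (m {a}).toReal ≤ F a - F b := by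
    intro b hb
    have hsub : Iic b ⊆ Iic a := Iic_subset_Iic.mpr hb.le
    have h1 : m {a} ≤ m (Iic a) - m (Iic b) := by
      rw [← measure_diff hsub measurableSet_Iic.nullMeasurableSet (measure_ne_top m _)]
      refine measure_mono ?_
      intro x hx
      simp only [mem_singleton_iff] at hx
      subst hx
      exact ⟨self_mem_Iic, by simpa using hb.not_ge⟩
    calc (m {a}).toReal ≤ (m (Iic a) - m (Iic b)).toReal :=
          ENNReal.toReal_mono (tsub_le_self.trans_lt (measure_lt_top m _)).ne h1
      _ = F a - F b := ENNReal.toReal_sub_of_le (measure_mono hsub) (measure_ne_top m _)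
  have h0 : (m {a}).toReal ≤ 0 := by
    by_contra hcon
    push_neg at hcon
    obtain ⟨δ, hδ, hcd⟩ := Metric.continuousAt_iff.mp (hc.continuousAt (x := a)) _ hcon
    have hb : a - δ/2 < a := by linarith
    have hk := key _ hb
    have hd : dist (a - δ/2) a < δ := by
      rw [Real.dist_eq, abs_of_nonpos (by linarith)]; linarith
    have h3 := hcd hd
    rw [Real.dist_eq] at h3
    have h2 : F a - F (a - δ/2) < (m {a}).toReal :=
      lt_of_le_of_lt (le_abs_self _) (by rwa [abs_sub_comm])
    linarith
  exact ((ENNReal.toReal_eq_zero_iff (m {a})).mp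
    (le_antisymm h0 ENNReal.toReal_nonneg)).resolve_right (measure_ne_top m {a})

private lemma integrable_of_bdd {α : Type*} [MeasurableSpace α] {m : Measure α}
    [IsFiniteMeasure m] {f : α → ℝ} {C : ℝ} (hm : AEStronglyMeasurable f m)
    (hb : ∀ᵐ x ∂m, |f x| ≤ C) : Integrable f m :=
  (integrable_const C).mono' hm
    (by filter_upwards [hb] with x h using by simpa [Real.norm_eq_abs] using h)

set_option maxHeartbeats 1000000 in
/-- Lemma 2: `Φ₁(x,t,x) = ∫ ξ_x(s,d,t)² dν_x(s,d)
= ∫_{(0,t]} dH¹_x(v)/(1-H_x(v))²`. -/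
theorem Phi1_formula (νx : Measure (ℝ × Bool)) [IsProbabilityMeasure νx]
    (hHxc : Continuous (Hd νx)) (hH1xc : Continuous (H1d νx))
    (hsuppx : νx {q : ℝ × Bool | q.1 < 0} = 0)
    (t : ℝ) (ht : 0 ≤ t)
    (θ : ℝ) (hθ : 0 < θ) (hθle : ∀ s ∈ Icc (0 : ℝ) t, θ ≤ 1 - Hd νx s) :
    (∫ q, (xi νx t q.1 q.2) ^ 2 ∂νx) =
      ∫ v in Ioc 0 t, 1 / (1 - Hd νx v) ^ 2 ∂(H1m νx) := by
  -- Notation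
  set G : ℝ → ℝ := fun s => 1 - Hd νx s with hGdef
  set g : ℝ → ℝ := fun u => 1 / (1 - Hd νx u) ^ 2 with hgdef
  set S : Set (ℝ × Bool) := {q | q.2 = true} with hSdef
  set η : Measure ℝ := H1m νx with hηdef
  set μ : Measure ℝ := Measure.map Prod.fst νx with hμdef
  set κ : Measure ℝ := η.restrict (Ioc 0 t) with hκdef
  have mS : MeasurableSet S := (measurableSet_singleton true).preimage measurable_snd
  have mG : Measurable G := (continuous_const.sub hHxc).measurable
  have mg : Measurable g := measurable_const.div ((continuous_const.sub hHxc).measurable.pow_const 2)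
  -- finiteness / probability instances
  have hημ : ∀ (A : Set ℝ), MeasurableSet A → η A = νx (Prod.fst ⁻¹' A ∩ S) := by
    intro A hA
    rw [hηdef, H1m, Measure.map_apply measurable_fst hA, Measure.restrict_apply (hA.preimage measurable_fst)]
  have hημ' : ∀ (A : Set ℝ), MeasurableSet A → η A ≤ 1 := by
    intro A hA
    rw [hημ A hA]
    exact le_trans (measure_mono (Set.subset_univ _)) (by simp)
  have hηfin : IsFiniteMeasure η := by
    constructor
    exact lt_of_le_of_lt (hημ' univ MeasurableSet.univ) (by norm_num)
  have hμprob : IsProbabilityMeasure μ := Measure.isProbabilityMeasure_map measurable_fst.aemeasurable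
  have hκfin : IsFiniteMeasure κ := by
    constructor
    rw [hκdef, Measure.restrict_apply_univ]
    exact lt_of_le_of_lt (hημ' _ measurableSet_Ioc) (by norm_num)
  -- distribution function identities
  have hμIic : ∀ s, (μ (Iic s)).toReal = Hd νx s := by
    intro s
    rw [hμdef, Measure.map_apply measurable_fst measurableSet_Iic, Hd, prod_univ]
  have hηIic : ∀ s, (η (Iic s)).toReal = H1d νx s := by
    intro s
    have hset : Iic s ×ˢ ({true} : Set Bool) = Prod.fst ⁻¹' Iic s ∩ S := by
      rw [hSdef]; ext ⟨a, b⟩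
      constructor
      · rintro ⟨h1, h2⟩; exact ⟨h1, h2⟩
      · rintro ⟨h1, h2⟩; exact ⟨h1, h2⟩
    rw [hημ _ measurableSet_Iic, H1d, hset]
  -- no atoms
  have hμatom : ∀ a, μ {a} = 0 := by
    refine null_singleton_of_cont μ ?_
    have : (fun s => (μ (Iic s)).toReal) = Hd νx := funext hμIic
    rw [this]; exact hHxc
  have hηatom : ∀ a, η {a} = 0 := by
    refine null_singleton_of_cont η ?_
    have : (fun s => (η (Iic s)).toReal) = H1d νx := funext hηIic
    rw [this]; exact hH1xc
  -- η vanishes on (-∞, 0]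
  have hηneg : η (Iic 0) = 0 := by
    have h1 : η (Iio 0) = 0 := by
      rw [hημ _ measurableSet_Iio]
      refine measure_mono_null ?_ hsuppx
      intro q hq; exact hq.1
    have : η (Iic 0) ≤ η (Iio 0) + η {0} := by
      rw [← Iio_union_right]; exact measure_union_le _ _
    simpa [h1, hηatom 0] using this
  -- survival function
  have hμIci : ∀ a, (μ (Ici a)).toReal = G a := by
    intro a
    have h1 : μ (Iio a) = μ (Iic a) := by
      refine le_antisymm (measure_mono Iio_subset_Iic_self) ?_
      have : Iic a ⊆ Iio a ∪ {a} := by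
        intro x hx
        rcases lt_or_eq_of_le (mem_Iic.mp hx) with h | h
        · exact Or.inl h
        · exact Or.inr (by simp [h])
      calc μ (Iic a) ≤ μ (Iio a ∪ {a}) := measure_mono this
        _ ≤ μ (Iio a) + μ {a} := measure_union_le _ _
        _ = μ (Iio a) := by rw [hμatom a, add_zero]
    rw [← compl_Iio, prob_compl_eq_one_sub measurableSet_Iio, h1,
      ENNReal.toReal_sub_of_le prob_le_one ENNReal.one_ne_top, ENNReal.toReal_one, hμIic]
  -- bounds
  have hHd_nonneg : ∀ s, 0 ≤ Hd νx s := fun s => ENNReal.toReal_nonneg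
  have hG1 : ∀ s, G s ≤ 1 := by intro s; simp [hGdef, hHd_nonneg s]
  have hGθ : ∀ s ∈ Ioc (0:ℝ) t, θ ≤ G s := fun s hs => hθle s ⟨hs.1.le, hs.2⟩
  have hgnn : ∀ u, 0 ≤ g u := by intro u; rw [hgdef]; positivity
  have hgbd : ∀ u ∈ Ioc (0:ℝ) t, g u ≤ (θ ^ 2)⁻¹ := by
    intro u hu
    have h1 : θ ≤ G u := hGθ u hu
    have h2 : θ ^ 2 ≤ G u ^ 2 := by nlinarith
    have h3 : (0:ℝ) < θ ^ 2 := by positivity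
    rw [hgdef]
    simp only [one_div]
    have : (1 - Hd νx u) ^ 2 = G u ^ 2 := by rw [hGdef]
    rw [this]
    exact inv_anti₀ h3 h2
  have hκae : ∀ᵐ u ∂κ, u ∈ Ioc (0:ℝ) t := ae_restrict_mem measurableSet_Ioc
  have hκuniv : (κ univ).toReal ≤ 1 := by
    rw [hκdef, Measure.restrict_apply_univ]
    exact ENNReal.toReal_le_of_le_ofReal zero_le_one (by simpa using hημ' _ measurableSet_Ioc)
  -- the kernel h and the function B
  set h : ℝ → ℝ → ℝ := fun u s => if u ≤ s then g u else 0 with hhdef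
  have mh : Measurable (fun p : ℝ × ℝ => h p.1 p.2) := by
    refine Measurable.ite (measurableSet_le measurable_fst measurable_snd) (mg.comp measurable_fst) measurable_const
  have hhnn : ∀ u s, 0 ≤ h u s := by
    intro u s; rw [hhdef]; dsimp only; split
    · exact hgnn u
    · exact le_refl 0
  set B : ℝ → ℝ := fun s => ∫ u, h u s ∂κ with hBdef
  have mhs : ∀ s, Measurable (fun u => h u s) := by
    intro s
    exact mh.comp (measurable_id.prodMk measurable_const)
  have hIh : ∀ s, Integrable (fun u => h u s) κ := by
    intro s
    refine integrable_of_bdd (C := (θ ^ 2)⁻¹) (mhs s).aestronglyMeasurable ?_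
    filter_upwards [hκae] with u hu
    rw [abs_of_nonneg (hhnn u s), hhdef]
    dsimp only
    split
    · exact hgbd u hu
    · positivity
  have hBbd : ∀ s, |B s| ≤ (θ ^ 2)⁻¹ := by
    intro s
    have hb : ∀ᵐ u ∂κ, ‖h u s‖ ≤ (θ ^ 2)⁻¹ := by
      filter_upwards [hκae] with u hu
      rw [Real.norm_eq_abs, abs_of_nonneg (hhnn u s), hhdef]
      dsimp only
      split
      · exact hgbd u hu
      · positivity
    have h2 := norm_integral_le_of_norm_le_const (μ := κ) hb
    simp only [hBdef]
    calc |∫ u, h u s ∂κ| = ‖∫ u, h u s ∂κ‖ := (Real.norm_eq_abs _).symm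
      _ ≤ (θ ^ 2)⁻¹ * (κ univ).toReal := h2
      _ ≤ (θ ^ 2)⁻¹ * 1 := by
          exact mul_le_mul_of_nonneg_left hκuniv (by positivity)
      _ = (θ ^ 2)⁻¹ := mul_one _
  have hBmono : Monotone B := by
    intro s s' hss'
    simp only [hBdef]
    refine integral_mono (hIh s) (hIh s') ?_
    intro u
    simp only [hhdef]
    by_cases h1 : u ≤ s
    · rw [if_pos h1, if_pos (h1.trans hss')]
    · rw [if_neg h1]
      split
      · exact hgnn u
      · exact le_refl 0
  have mB : Measurable B := hBmono.measurable
  -- rewrite xi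
  set A : ℝ × Bool → ℝ := fun q => (if q.1 ≤ t ∧ q.2 = true then 1 else 0) / G q.1 with hAdef
  have hxi_eq : ∀ q : ℝ × Bool, xi νx t q.1 q.2 = A q - B q.1 := by
    intro q
    have e1 : (∫ u in Ioc 0 t, (if u ≤ q.1 then 1 else 0) / (1 - Hd νx u) ^ 2 ∂(H1m νx))
        = B q.1 := by
      simp only [hBdef, hκdef, hηdef]
      refine integral_congr_ae (ae_of_all _ ?_)
      intro u
      by_cases hu : u ≤ q.1
      · simp [hu, hhdef, hgdef]
      · simp [hu, hhdef]
    rw [xi, e1]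
  have mA : Measurable A := by
    rw [hAdef]
    refine Measurable.div ?_ (mG.comp measurable_fst)
    refine Measurable.ite ?_ measurable_const measurable_const
    have e : {q : ℝ × Bool | q.1 ≤ t ∧ q.2 = true} = (Prod.fst ⁻¹' Iic t) ∩ S := by
      rw [hSdef]; rfl
    rw [e]
    exact (measurableSet_Iic.preimage measurable_fst).inter mS
  have haeq : ∀ᵐ q ∂νx, 0 ≤ q.1 := by
    rw [ae_iff]
    have e : {q : ℝ × Bool | ¬ 0 ≤ q.1} = {q : ℝ × Bool | q.1 < 0} := by
      ext q; simp [not_le]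
    rw [e]; exact hsuppx
  have hAbd : ∀ q : ℝ × Bool, 0 ≤ q.1 → |A q| ≤ θ⁻¹ := by
    intro q hq
    rw [hAdef]
    dsimp only
    by_cases hc : q.1 ≤ t ∧ q.2 = true
    · rw [if_pos hc]
      have h1 : θ ≤ G q.1 := hθle q.1 ⟨hq, hc.1⟩
      have h2 : 0 < G q.1 := lt_of_lt_of_le hθ h1
      rw [abs_of_nonneg (by positivity), one_div]
      exact inv_anti₀ hθ h1
    · rw [if_neg hc, zero_div, abs_zero]
      positivity
  -- integrability over νx
  have intA2 : Integrable (fun q => A q ^ 2) νx := by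
    refine integrable_of_bdd (C := θ⁻¹ ^ 2) ((mA.pow_const 2).aestronglyMeasurable) ?_
    filter_upwards [haeq] with q hq
    calc |A q ^ 2| = |A q| ^ 2 := abs_pow _ 2
      _ ≤ θ⁻¹ ^ 2 := by have := hAbd q hq; nlinarith [abs_nonneg (A q)]
  have intAB : Integrable (fun q => A q * B q.1) νx := by
    refine integrable_of_bdd (C := θ⁻¹ * (θ ^ 2)⁻¹) ((mA.mul (mB.comp measurable_fst)).aestronglyMeasurable) ?_
    filter_upwards [haeq] with q hq
    rw [abs_mul]
    exact mul_le_mul (hAbd q hq) (hBbd q.1) (abs_nonneg _) (by positivity)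
  have intB2 : Integrable (fun q : ℝ × Bool => B q.1 ^ 2) νx := by
    refine integrable_of_bdd (C := ((θ ^ 2)⁻¹) ^ 2) (((mB.comp measurable_fst).pow_const 2).aestronglyMeasurable) ?_
    refine ae_of_all _ fun q => ?_
    calc |B q.1 ^ 2| = |B q.1| ^ 2 := abs_pow _ 2
      _ ≤ ((θ ^ 2)⁻¹) ^ 2 := by have := hBbd q.1; nlinarith [abs_nonneg (B q.1)]
  -- expansion of the square
  have hexp : (∫ q, (xi νx t q.1 q.2) ^ 2 ∂νx)
      = (∫ q, A q ^ 2 ∂νx) - 2 * (∫ q, A q * B q.1 ∂νx) + ∫ q : ℝ × Bool, B q.1 ^ 2 ∂νx := by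
    have e : (fun q : ℝ × Bool => (xi νx t q.1 q.2) ^ 2)
        = fun q => A q ^ 2 - 2 * (A q * B q.1) + B q.1 ^ 2 := by
      funext q; rw [hxi_eq q]; ring
    have imul : Integrable (fun q : ℝ × Bool => 2 * (A q * B q.1)) νx := intAB.const_mul 2
    have isub : Integrable (fun q : ℝ × Bool => A q ^ 2 - 2 * (A q * B q.1)) νx :=
      intA2.sub imul
    rw [e, integral_add isub intB2, integral_sub intA2 imul, integral_const_mul]
  -- change of variables to η
  have hmap : ∀ f : ℝ → ℝ, Measurable f → (∫ s, f s ∂η) = ∫ q in S, f q.1 ∂νx := by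
    intro f hf
    rw [hηdef, H1m, integral_map measurable_fst.aemeasurable hf.aestronglyMeasurable]
  have hIicIoc : ∀ f : ℝ → ℝ, IntegrableOn f (Ioc 0 t) η →
      (∫ s in Iic t, f s ∂η) = ∫ s in Ioc 0 t, f s ∂η := by
    intro f hf
    have hint0 : IntegrableOn f (Iic 0) η := by
      rw [IntegrableOn, Measure.restrict_eq_zero.mpr hηneg]
      exact integrable_zero_measure
    rw [← Iic_union_Ioc_eq_Iic ht,
      setIntegral_union (Iic_disjoint_Ioc le_rfl) measurableSet_Ioc hint0 hf,
      Measure.restrict_eq_zero.mpr hηneg, integral_zero_measure, zero_add]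
  have hIg : IntegrableOn g (Ioc 0 t) η := by
    refine integrable_of_bdd (C := (θ ^ 2)⁻¹) mg.aestronglyMeasurable ?_
    filter_upwards [hκae] with u hu
    rw [abs_of_nonneg (hgnn u)]
    exact hgbd u hu
  have hA2 : (∫ q, A q ^ 2 ∂νx) = ∫ s in Ioc 0 t, g s ∂η := by
    have e1 : (fun q : ℝ × Bool => A q ^ 2)
        = S.indicator (fun q : ℝ × Bool => if q.1 ≤ t then g q.1 else 0) := by
      funext q
      simp only [hAdef, Set.indicator_apply]
      by_cases hd : q.2 = true
      · rw [if_pos (show q ∈ S from hd)]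
        by_cases hst : q.1 ≤ t
        · rw [if_pos (show q.1 ≤ t ∧ q.2 = true from ⟨hst, hd⟩), if_pos hst, div_pow,
            one_pow, hgdef, hGdef]
        · rw [if_neg (show ¬(q.1 ≤ t ∧ q.2 = true) from fun hc => hst hc.1), if_neg hst,
            zero_div, zero_pow two_ne_zero]
      · rw [if_neg (show q ∉ S from hd),
          if_neg (show ¬(q.1 ≤ t ∧ q.2 = true) from fun hc => hd hc.2), zero_div,
          zero_pow two_ne_zero]
    have mf : Measurable (fun s : ℝ => if s ≤ t then g s else 0) :=
      Measurable.ite measurableSet_Iic mg measurable_const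
    have e2 : (fun s : ℝ => if s ≤ t then g s else 0) = (Iic t).indicator g := by
      funext s
      by_cases hs : s ≤ t <;> simp [Set.indicator_apply, mem_Iic, hs]
    rw [e1, integral_indicator mS, ← hmap _ mf, e2, integral_indicator measurableSet_Iic]
    exact hIicIoc g hIg
  have hBG : IntegrableOn (fun s => B s / G s) (Ioc 0 t) η := by
    refine integrable_of_bdd (C := (θ ^ 2)⁻¹ / θ) ((mB.div mG).aestronglyMeasurable) ?_
    filter_upwards [hκae] with u hu
    have h1 : θ ≤ G u := hGθ u hu
    have h2 : 0 < G u := lt_of_lt_of_le hθ h1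
    rw [abs_div, abs_of_pos h2]
    exact div_le_div₀ (by positivity) (hBbd u) hθ h1
  have hAB : (∫ q, A q * B q.1 ∂νx) = ∫ s in Ioc 0 t, B s / G s ∂η := by
    have e1 : (fun q : ℝ × Bool => A q * B q.1)
        = S.indicator (fun q : ℝ × Bool => if q.1 ≤ t then B q.1 / G q.1 else 0) := by
      funext q
      simp only [hAdef, Set.indicator_apply]
      by_cases hd : q.2 = true
      · rw [if_pos (show q ∈ S from hd)]
        by_cases hst : q.1 ≤ t
        · rw [if_pos (show q.1 ≤ t ∧ q.2 = true from ⟨hst, hd⟩), if_pos hst,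
            div_mul_eq_mul_div, one_mul]
        · rw [if_neg (show ¬(q.1 ≤ t ∧ q.2 = true) from fun hc => hst hc.1), if_neg hst,
            zero_div, zero_mul]
      · rw [if_neg (show q ∉ S from hd),
          if_neg (show ¬(q.1 ≤ t ∧ q.2 = true) from fun hc => hd hc.2), zero_div, zero_mul]
    have mf : Measurable (fun s : ℝ => if s ≤ t then B s / G s else 0) :=
      Measurable.ite measurableSet_Iic (mB.div mG) measurable_const
    have e2 : (fun s : ℝ => if s ≤ t then B s / G s else 0)
        = (Iic t).indicator (fun s => B s / G s) := by
      funext s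
      by_cases hs : s ≤ t <;> simp [Set.indicator_apply, mem_Iic, hs]
    rw [e1, integral_indicator mS, ← hmap _ mf, e2, integral_indicator measurableSet_Iic]
    exact hIicIoc _ hBG
  have hB2ν : (∫ q : ℝ × Bool, B q.1 ^ 2 ∂νx) = ∫ s, B s ^ 2 ∂μ := by
    rw [hμdef, integral_map measurable_fst.aemeasurable ((mB.pow_const 2)).aestronglyMeasurable]
  have habs : ∀ u s : ℝ, u ∈ Ioc 0 t → |h u s| ≤ (θ ^ 2)⁻¹ := by
    intro u s hu
    rw [abs_of_nonneg (hhnn u s), hhdef]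
    dsimp only
    split
    · exact hgbd u hu
    · positivity
  -- product measure
  set P : Measure (ℝ × ℝ) := κ.prod κ with hPdef
  have hPfin : IsFiniteMeasure P := by rw [hPdef]; infer_instance
  have haeP : ∀ᵐ p ∂P, p.1 ∈ Ioc 0 t ∧ p.2 ∈ Ioc 0 t := by
    rw [hPdef, hκdef, Measure.prod_restrict]
    filter_upwards [ae_restrict_mem (measurableSet_Ioc.prod measurableSet_Ioc)] with p hp
    exact ⟨hp.1, hp.2⟩
  set Φ : ℝ × ℝ → ℝ := fun p => G (p.1 ⊔ p.2) * (g p.1 * g p.2) with hΦdef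
  have mΦ : Measurable Φ :=
    (mG.comp (measurable_fst.max measurable_snd)).mul
      ((mg.comp measurable_fst).mul (mg.comp measurable_snd))
  have hΦbd : ∀ᵐ p ∂P, |Φ p| ≤ (θ ^ 2)⁻¹ * (θ ^ 2)⁻¹ := by
    filter_upwards [haeP] with p hp
    have h1 : p.1 ⊔ p.2 ∈ Ioc 0 t := ⟨lt_of_lt_of_le hp.1.1 le_sup_left, sup_le hp.1.2 hp.2.2⟩
    have hG0 : 0 ≤ G (p.1 ⊔ p.2) := le_trans hθ.le (hGθ _ h1)
    rw [hΦdef]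
    dsimp only
    rw [abs_mul, abs_mul, abs_of_nonneg hG0, abs_of_nonneg (hgnn p.1), abs_of_nonneg (hgnn p.2)]
    calc G (p.1 ⊔ p.2) * (g p.1 * g p.2) ≤ 1 * ((θ ^ 2)⁻¹ * (θ ^ 2)⁻¹) := by
          exact mul_le_mul (hG1 _)
            (mul_le_mul (hgbd _ hp.1) (hgbd _ hp.2) (hgnn p.2) (by positivity))
            (mul_nonneg (hgnn p.1) (hgnn p.2)) one_pos.le
      _ = (θ ^ 2)⁻¹ * (θ ^ 2)⁻¹ := one_mul _
  -- the kernel identity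
  have hker : ∀ s u v : ℝ, h u s * h v s = (Ici (u ⊔ v)).indicator (fun _ => g u * g v) s := by
    intro s u v
    rw [Set.indicator_apply, hhdef]
    dsimp only
    by_cases hu : u ≤ s
    · by_cases hv : v ≤ s
      · rw [if_pos hu, if_pos hv, if_pos (mem_Ici.mpr (sup_le hu hv))]
      · rw [if_pos hu, if_neg hv, mul_zero,
          if_neg (fun hm => hv (le_trans le_sup_right (mem_Ici.mp hm)))]
    · rw [if_neg hu, zero_mul,
        if_neg (fun hm => hu (le_trans le_sup_left (mem_Ici.mp hm)))]
  have hstep1 : ∀ s, B s ^ 2 = ∫ p, h p.1 s * h p.2 s ∂P := by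
    intro s
    have mint : Integrable (fun p : ℝ × ℝ => h p.1 s * h p.2 s) P := by
      refine integrable_of_bdd (C := (θ ^ 2)⁻¹ * (θ ^ 2)⁻¹)
        (((mhs s).comp measurable_fst).mul ((mhs s).comp measurable_snd)).aestronglyMeasurable ?_
      filter_upwards [haeP] with p hp
      rw [abs_mul]
      exact mul_le_mul (habs _ _ hp.1) (habs _ _ hp.2) (abs_nonneg _) (by positivity)
    calc B s ^ 2 = B s * B s := sq (B s)
      _ = (∫ u, h u s ∂κ) * B s := by rw [hBdef]
      _ = ∫ u, h u s * B s ∂κ := (integral_mul_const _ _).symm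
      _ = ∫ u, ∫ v, h u s * h v s ∂κ ∂κ := by
          refine integral_congr_ae (ae_of_all _ fun u => ?_)
          show h u s * B s = ∫ v, h u s * h v s ∂κ
          rw [integral_const_mul]
      _ = ∫ p, h p.1 s * h p.2 s ∂P := by rw [hPdef, integral_prod _ (hPdef ▸ mint)]
  have hB2μ : (∫ s, B s ^ 2 ∂μ) = ∫ p, Φ p ∂P := by
    have hbadP : P {p : ℝ × ℝ | ¬(p.1 ∈ Ioc 0 t ∧ p.2 ∈ Ioc 0 t)} = 0 := ae_iff.mp haeP
    have hbad : (μ.prod P) {z : ℝ × ℝ × ℝ | ¬(z.2.1 ∈ Ioc 0 t ∧ z.2.2 ∈ Ioc 0 t)} = 0 := by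
      have e : {z : ℝ × ℝ × ℝ | ¬(z.2.1 ∈ Ioc 0 t ∧ z.2.2 ∈ Ioc 0 t)}
          = (univ : Set ℝ) ×ˢ {p : ℝ × ℝ | ¬(p.1 ∈ Ioc 0 t ∧ p.2 ∈ Ioc 0 t)} := by
        ext z; simp [Set.mem_prod]
      rw [e, Measure.prod_prod, hbadP, mul_zero]
    have hswapint : Integrable
        (Function.uncurry fun s (p : ℝ × ℝ) => h p.1 s * h p.2 s) (μ.prod P) := by
      refine integrable_of_bdd (C := (θ ^ 2)⁻¹ * (θ ^ 2)⁻¹)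
        (((mh.comp ((measurable_fst.comp measurable_snd).prodMk measurable_fst)).mul
          (mh.comp ((measurable_snd.comp measurable_snd).prodMk
            measurable_fst)))).aestronglyMeasurable ?_
      rw [ae_iff]
      refine measure_mono_null ?_ hbad
      intro z hz
      simp only [mem_setOf_eq] at hz ⊢
      intro hmem
      refine hz ?_
      rw [Function.uncurry]
      calc |h z.2.1 z.1 * h z.2.2 z.1| = |h z.2.1 z.1| * |h z.2.2 z.1| := abs_mul _ _
        _ ≤ (θ ^ 2)⁻¹ * (θ ^ 2)⁻¹ :=
            mul_le_mul (habs _ _ hmem.1) (habs _ _ hmem.2) (abs_nonneg _) (by positivity)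
    calc (∫ s, B s ^ 2 ∂μ) = ∫ s, ∫ p, h p.1 s * h p.2 s ∂P ∂μ :=
          integral_congr_ae (ae_of_all _ hstep1)
      _ = ∫ p, ∫ s, h p.1 s * h p.2 s ∂μ ∂P := integral_integral_swap hswapint
      _ = ∫ p, Φ p ∂P := by
          refine integral_congr_ae (ae_of_all _ fun p => ?_)
          show (∫ s, h p.1 s * h p.2 s ∂μ) = Φ p
          rw [show (fun s => h p.1 s * h p.2 s)
              = (Ici (p.1 ⊔ p.2)).indicator (fun _ => g p.1 * g p.2) from
            funext (fun s => hker s p.1 p.2)]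
          rw [integral_indicator_const _ measurableSet_Ici, smul_eq_mul, measureReal_def, hμIci, hΦdef]
  -- diagonal is null
  have hdiag : P {p : ℝ × ℝ | p.1 = p.2} = 0 := by
    have hκatom : ∀ a, κ {a} = 0 := by
      intro a
      refine le_antisymm ?_ zero_le
      rw [hκdef, Measure.restrict_apply (measurableSet_singleton a)]
      exact le_trans (measure_mono inter_subset_left) (hηatom a).le
    rw [hPdef, Measure.prod_apply (measurableSet_eq_fun measurable_fst measurable_snd)]
    have e : ∀ x : ℝ, (Prod.mk x ⁻¹' {p : ℝ × ℝ | p.1 = p.2}) = {x} := by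
      intro x; ext y; simp [eq_comm]
    simp [e, hκatom]
  have haediag : ∀ᵐ p ∂P, p.1 ≠ p.2 := by
    rw [ae_iff]
    have e : {p : ℝ × ℝ | ¬p.1 ≠ p.2} = {p : ℝ × ℝ | p.1 = p.2} := by
      ext p; simp [not_not]
    rw [e]; exact hdiag
  have mite_le : Measurable (fun p : ℝ × ℝ => if p.1 ≤ p.2 then (1:ℝ) else 0) :=
    Measurable.ite (measurableSet_le measurable_fst measurable_snd)
      measurable_const measurable_const
  have mite_lt : Measurable (fun p : ℝ × ℝ => if p.2 < p.1 then (1:ℝ) else 0) :=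
    Measurable.ite (measurableSet_lt measurable_snd measurable_fst)
      measurable_const measurable_const
  have hbd_aux : ∀ (w : ℝ × ℝ → ℝ), (∀ p, |w p| ≤ 1) →
      ∀ᵐ p ∂P, |Φ p * w p| ≤ (θ ^ 2)⁻¹ * (θ ^ 2)⁻¹ * 1 := by
    intro w hw
    filter_upwards [hΦbd] with p hp
    rw [abs_mul]
    exact mul_le_mul hp (hw p) (abs_nonneg _) (by positivity)
  have intΦle : Integrable (fun p : ℝ × ℝ => Φ p * (if p.1 ≤ p.2 then 1 else 0)) P := by
    refine integrable_of_bdd (C := (θ ^ 2)⁻¹ * (θ ^ 2)⁻¹ * 1)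
      ((mΦ.mul mite_le).aestronglyMeasurable) (hbd_aux _ fun p => ?_)
    split <;> simp
  have intΦlt : Integrable (fun p : ℝ × ℝ => Φ p * (if p.2 < p.1 then 1 else 0)) P := by
    refine integrable_of_bdd (C := (θ ^ 2)⁻¹ * (θ ^ 2)⁻¹ * 1)
      ((mΦ.mul mite_lt).aestronglyMeasurable) (hbd_aux _ fun p => ?_)
    split <;> simp
  have hswap : (∫ p, Φ p * (if p.2 < p.1 then 1 else 0) ∂P)
      = ∫ p, Φ p * (if p.1 < p.2 then 1 else 0) ∂P := by
    have hmapswap : Measure.map Prod.swap P = P := by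
      rw [hPdef]; exact Measure.prod_swap
    conv_lhs => rw [← hmapswap]
    rw [integral_map measurable_swap.aemeasurable]
    · refine integral_congr_ae (ae_of_all _ fun p => ?_)
      show Φ (Prod.swap p) * (if (Prod.swap p).2 < (Prod.swap p).1 then 1 else 0)
          = Φ p * (if p.1 < p.2 then 1 else 0)
      rw [hΦdef]
      dsimp only [Prod.swap, Prod.fst, Prod.snd]
      rw [sup_comm p.2 p.1]
      ring
    · rw [hmapswap]
      exact (mΦ.mul mite_lt).aestronglyMeasurable
  have hltle : (∫ p, Φ p * (if p.1 < p.2 then 1 else 0) ∂P)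
      = ∫ p, Φ p * (if p.1 ≤ p.2 then 1 else 0) ∂P := by
    refine integral_congr_ae ?_
    filter_upwards [haediag] with p hp
    by_cases hle : p.1 ≤ p.2
    · rw [if_pos hle, if_pos (lt_of_le_of_ne hle hp)]
    · rw [if_neg hle, if_neg (fun hlt => hle hlt.le)]
  have hsplitΦ : (∫ p, Φ p ∂P) = 2 * ∫ p, Φ p * (if p.1 ≤ p.2 then 1 else 0) ∂P := by
    have e : ∀ p : ℝ × ℝ, Φ p
        = Φ p * (if p.1 ≤ p.2 then 1 else 0) + Φ p * (if p.2 < p.1 then 1 else 0) := by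
      intro p
      by_cases hle : p.1 ≤ p.2
      · rw [if_pos hle, if_neg (not_lt.mpr hle), mul_one, mul_zero, add_zero]
      · rw [if_neg hle, if_pos (lt_of_not_ge hle), mul_zero, mul_one, zero_add]
    calc (∫ p, Φ p ∂P)
        = ∫ p, (Φ p * (if p.1 ≤ p.2 then 1 else 0)
            + Φ p * (if p.2 < p.1 then 1 else 0)) ∂P := integral_congr_ae (ae_of_all _ e)
      _ = (∫ p, Φ p * (if p.1 ≤ p.2 then 1 else 0) ∂P)
            + ∫ p, Φ p * (if p.2 < p.1 then 1 else 0) ∂P := integral_add intΦle intΦlt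
      _ = 2 * ∫ p, Φ p * (if p.1 ≤ p.2 then 1 else 0) ∂P := by rw [hswap, hltle]; ring
  -- Fubini back
  have hgG : ∀ u, g u = 1 / G u ^ 2 := fun u => rfl
  have hfub2 : (∫ p, Φ p * (if p.1 ≤ p.2 then 1 else 0) ∂P) = ∫ v, B v / G v ∂κ := by
    have inner : ∀ v ∈ Ioc (0:ℝ) t,
        (∫ u, Φ (u, v) * (if (u, v).1 ≤ (u, v).2 then 1 else 0) ∂κ) = B v / G v := by
      intro v hv
      have hGv : 0 < G v := lt_of_lt_of_le hθ (hGθ v hv)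
      calc (∫ u, Φ (u, v) * (if (u, v).1 ≤ (u, v).2 then 1 else 0) ∂κ)
          = ∫ u, h u v * (G v * g v) ∂κ := by
            refine integral_congr_ae (ae_of_all _ fun u => ?_)
            rw [hΦdef, hhdef]
            dsimp only
            by_cases hu : u ≤ v
            · rw [if_pos hu, if_pos hu, mul_one, sup_eq_right.mpr hu]; ring
            · rw [if_neg hu, if_neg hu, mul_zero, zero_mul]
        _ = (∫ u, h u v ∂κ) * (G v * g v) := integral_mul_const _ _
        _ = B v * (G v * g v) := by
            have e : (∫ u, h u v ∂κ) = B v := rfl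
            rw [e]
        _ = B v / G v := by
            rw [hgG v]
            field_simp
    rw [hPdef, integral_prod_symm _ (hPdef ▸ intΦle)]
    refine integral_congr_ae ?_
    filter_upwards [hκae] with v hv
    exact inner v hv
  have hB2final : (∫ q : ℝ × Bool, B q.1 ^ 2 ∂νx) = 2 * ∫ v, B v / G v ∂κ :=
    hB2ν.trans (hB2μ.trans (hsplitΦ.trans (by rw [hfub2])))
  have hABκ : (∫ q, A q * B q.1 ∂νx) = ∫ s, B s / G s ∂κ := hAB
  have hA2κ : (∫ q, A q ^ 2 ∂νx) = ∫ s, g s ∂κ := hA2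
  calc (∫ q, (xi νx t q.1 q.2) ^ 2 ∂νx)
      = (∫ q, A q ^ 2 ∂νx) - 2 * (∫ q, A q * B q.1 ∂νx)
          + ∫ q : ℝ × Bool, B q.1 ^ 2 ∂νx := hexp
    _ = (∫ s, g s ∂κ) - 2 * (∫ s, B s / G s ∂κ) + 2 * ∫ v, B v / G v ∂κ := by
        rw [hA2κ, hABκ, hB2final]
    _ = ∫ s, g s ∂κ := by ring
    _ = ∫ v in Ioc 0 t, 1 / (1 - Hd νx v) ^ 2 ∂(H1m νx) := by
        simp only [hgdef, hκdef, hηdef]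

end Stmt4
end

section
/- Let ν_x be a probability measure on ℝ × {0,1} (the conditional law of (T, δ) given X = x). Then Φ₂(x,t,x) := ∫ ξ_x(s,d,t) ξ_x(s,d,∞) dν_x(s,d) = ∫_{(0,t]} dH¹_x(v)/(1 − H_x(v))². -/
open MeasureTheory Set Filter Topology

namespace Stmt5

lemma noAtoms_of_cont (μ : Measure ℝ) [IsFiniteMeasure μ]
    (h : Continuous fun s => (μ (Iic s)).toReal) : NoAtoms μ := by
  constructor
  intro a
  set F : ℝ → ℝ := fun s => (μ (Iic s)).toReal with hF
  have key : ∀ n : ℕ, (μ {a}).toReal ≤ F a - F (a - 1/(n+1)) := by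
    intro n
    have hε : (0:ℝ) < 1/(n+1) := by positivity
    have hsub : μ {a} ≤ μ (Ioc (a - 1/(n+1)) a) := by
      apply measure_mono
      intro x hx
      simp only [mem_singleton_iff] at hx
      subst hx
      exact ⟨by linarith, le_refl _⟩
    have hdisj : μ (Iic (a - 1/(n+1))) + μ (Ioc (a - 1/(n+1)) a) = μ (Iic a) := by
      rw [← measure_union (by
        rw [Set.disjoint_left]
        rintro x hx ⟨hx1, hx2⟩
        simp only [mem_Iic] at hx
        linarith) measurableSet_Ioc]
      rw [Set.Iic_union_Ioc_eq_Iic (by linarith)]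
    have h1 : (μ (Ioc (a - 1/(n+1)) a)).toReal = F a - F (a - 1/(n+1)) := by
      have := congrArg ENNReal.toReal hdisj
      rw [ENNReal.toReal_add (measure_ne_top _ _) (measure_ne_top _ _)] at this
      simp only [hF]; linarith
    calc (μ {a}).toReal ≤ (μ (Ioc (a - 1/(n+1)) a)).toReal :=
          ENNReal.toReal_mono (measure_ne_top _ _) hsub
      _ = _ := h1
  have hlim : Tendsto (fun n : ℕ => F a - F (a - 1/(n+1))) atTop (𝓝 0) := by
    have hseq : Tendsto (fun n : ℕ => a - 1/((n:ℝ)+1)) atTop (𝓝 a) := by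
      simpa using ((tendsto_const_nhds (x := a) (f := atTop (α := ℕ))).sub
        tendsto_one_div_add_atTop_nhds_zero_nat)
    have h2 := (h.tendsto a).comp hseq
    simpa using ((tendsto_const_nhds (x := F a) (f := atTop (α := ℕ))).sub h2)
  have h0 : (μ {a}).toReal ≤ 0 := ge_of_tendsto' hlim key
  have h0' : (μ {a}).toReal = 0 := le_antisymm h0 ENNReal.toReal_nonneg
  exact (ENNReal.toReal_eq_zero_iff _).mp h0' |>.resolve_right (measure_ne_top _ _)

/-- First-coordinate distribution function `H_ν(t) = ν((-∞,t] × {0,1})`. -/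
noncomputable def Hd (ν : Measure (ℝ × Bool)) (t : ℝ) : ℝ :=
  (ν (Iic t ×ˢ (univ : Set Bool))).toReal

/-- Subdistribution function `H¹_ν(t) = ν((-∞,t] × {1})`. -/
noncomputable def H1d (ν : Measure (ℝ × Bool)) (t : ℝ) : ℝ :=
  (ν (Iic t ×ˢ ({true} : Set Bool))).toReal

/-- Lebesgue–Stieltjes measure of `H¹_ν`: first marginal of `ν` restricted to `δ = 1`. -/
noncomputable def H1m (ν : Measure (ℝ × Bool)) : Measure ℝ :=
  Measure.map Prod.fst (ν.restrict {q : ℝ × Bool | q.2 = true})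

/-- `ξ_x(s,d,t)` for finite `t`. -/
noncomputable def xi (νx : Measure (ℝ × Bool)) (t s : ℝ) (d : Bool) : ℝ :=
  (if s ≤ t ∧ d = true then 1 else 0) / (1 - Hd νx s) -
    ∫ u in Ioc 0 t, (if u ≤ s then 1 else 0) / (1 - Hd νx u) ^ 2 ∂(H1m νx)

/-- `ξ_x(s,d,∞)`. -/
noncomputable def xiInf (νx : Measure (ℝ × Bool)) (s : ℝ) (d : Bool) : ℝ :=
  (if d = true then 1 else 0) / (1 - Hd νx s) -
    ∫ u in Ioi 0, (if u ≤ s then 1 else 0) / (1 - Hd νx u) ^ 2 ∂(H1m νx)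

set_option maxHeartbeats 2000000 in
/-- Lemma 3: `Φ₂(x,t,x) = ∫ ξ_x(s,d,t) ξ_x(s,d,∞) dν_x(s,d)
= ∫_{(0,t]} dH¹_x(v)/(1-H_x(v))²`. -/
theorem Phi2_formula (νx : Measure (ℝ × Bool)) [IsProbabilityMeasure νx]
    (hHxc : Continuous (Hd νx)) (hH1xc : Continuous (H1d νx))
    (hsuppx : νx {q : ℝ × Bool | q.1 < 0} = 0)
    (τ₀ : ℝ) (hτ : H1m νx (Ioi τ₀) = 0)
    (θ : ℝ) (hθ : 0 < θ) (hθle : ∀ s ∈ Icc (0 : ℝ) τ₀, θ ≤ 1 - Hd νx s)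
    (t : ℝ) (ht0 : 0 ≤ t) (htτ : t ≤ τ₀) :
    (∫ q, xi νx t q.1 q.2 * xiInf νx q.1 q.2 ∂νx) =
      ∫ v in Ioc 0 t, 1 / (1 - Hd νx v) ^ 2 ∂(H1m νx) := by
  classical
  have hτ0 : (0:ℝ) ≤ τ₀ := le_trans ht0 htτ
  set c : ℝ → ℝ := fun s => 1 - Hd νx s with hcdef
  set w : ℝ → ℝ := fun u => 1 / c u ^ 2 with hwdef
  set η : Measure ℝ := H1m νx with hη
  set μ : Measure ℝ := Measure.map Prod.fst νx with hμ
  have hS : MeasurableSet {q : ℝ × Bool | q.2 = true} :=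
    measurable_snd (measurableSet_singleton true)
  haveI : IsProbabilityMeasure μ := Measure.isProbabilityMeasure_map measurable_fst.aemeasurable
  haveI hηfin : IsFiniteMeasure η := by
    constructor
    rw [hη, H1m, Measure.map_apply measurable_fst MeasurableSet.univ]
    exact lt_of_le_of_lt (le_trans (Measure.restrict_le_self _) (le_refl _)) (measure_lt_top νx _)
  -- basic measure facts
  have hηapp : ∀ {A : Set ℝ}, MeasurableSet A → η A = νx (Prod.fst ⁻¹' A ∩ {q : ℝ × Bool | q.2 = true}) := by
    intro A hA
    rw [hη, H1m, Measure.map_apply measurable_fst hA, Measure.restrict_apply (hA.preimage measurable_fst)]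
  have hμapp : ∀ {A : Set ℝ}, MeasurableSet A → μ A = νx (Prod.fst ⁻¹' A) := by
    intro A hA
    rw [hμ, Measure.map_apply measurable_fst hA]
  have hημ : ∀ {A : Set ℝ}, MeasurableSet A → η A ≤ μ A := by
    intro A hA
    rw [hηapp hA, hμapp hA]
    exact measure_mono inter_subset_left
  have hμIio : μ (Iio 0) = 0 := by
    rw [hμapp measurableSet_Iio]
    exact measure_mono_null (fun q hq => hq) hsuppx
  have hμIic : ∀ s, μ (Iic s) ≠ ⊤ := fun s => measure_ne_top _ _
  have hHdeq : ∀ s, Hd νx s = (μ (Iic s)).toReal := by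
    intro s
    rw [Hd, hμapp measurableSet_Iic]
    have : Prod.fst ⁻¹' (Iic s) = Iic s ×ˢ (univ : Set Bool) := by
      ext q; simp
    rw [this]
  haveI hμna : NullSingletonClass μ := by
    apply noAtoms_of_cont
    have : (fun s => (μ (Iic s)).toReal) = Hd νx := by
      ext s; rw [hHdeq s]
    rw [this]; exact hHxc
  haveI hηna : NullSingletonClass η := by
    constructor
    intro a
    exact le_antisymm (le_trans (hημ (measurableSet_singleton a)) (le_of_eq (measure_singleton a)))
      (zero_le)
  have hμIic0 : μ (Iic 0) = 0 := by
    have : Iic (0:ℝ) = Iio 0 ∪ {0} := by ext x; simp [le_iff_lt_or_eq]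
    rw [this]
    exact le_antisymm (le_trans (measure_union_le _ _) (by simp [hμIio, measure_singleton])) (zero_le)
  have hηIic0 : η (Iic 0) = 0 :=
    le_antisymm (le_trans (hημ measurableSet_Iic) (le_of_eq hμIic0)) (zero_le)
  have hηIoiτ : η (Ioi τ₀) = 0 := hτ
  have hηae : ∀ᵐ u ∂η, u ∈ Ioc 0 τ₀ := by
    rw [ae_iff]
    refine measure_mono_null (fun x hx => ?_)
      (le_antisymm (le_trans (measure_union_le (Iic 0) (Ioi τ₀)) (by simp [hηIic0, hηIoiτ])) (zero_le))
    simp only [mem_Ioc, not_and_or, not_lt, not_le, mem_setOf_eq] at hx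
    rcases hx with h | h
    · exact Or.inl h
    · exact Or.inr h
  -- positivity facts on c
  have hHd01 : ∀ s, 0 ≤ Hd νx s ∧ Hd νx s ≤ 1 := by
    intro s
    constructor
    · exact ENNReal.toReal_nonneg
    · rw [Hd]
      refine ENNReal.toReal_le_of_le_ofReal one_pos.le ?_
      simp only [ENNReal.ofReal_one]
      exact le_trans (measure_mono (subset_univ _)) (le_of_eq measure_univ)
  have hc0 : ∀ s, 0 ≤ c s := fun s => by
    have := (hHd01 s).2; simp only [hcdef]; linarith
  have hcθ : ∀ u ∈ Ioc 0 τ₀, θ ≤ c u := fun u hu => hθle u ⟨hu.1.le, hu.2⟩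
  have hcm : Measurable c := (measurable_const.sub hHxc.measurable)
  have hwm : Measurable w := by
    simp only [hwdef, one_div]
    exact ((hcm.pow_const 2).inv)
  have hwnn : ∀ u, 0 ≤ w u := fun u => by
    simp only [hwdef, one_div, inv_nonneg]
    positivity
  have hwb : ∀ u ∈ Ioc 0 τ₀, |w u| ≤ θ⁻¹ * θ⁻¹ := by
    intro u hu
    have h1 := hcθ u hu
    rw [abs_of_nonneg (hwnn u)]
    simp only [hwdef, one_div]
    rw [← mul_inv]
    apply inv_anti₀ (by positivity)
    calc θ * θ ≤ c u * c u := mul_le_mul h1 h1 hθ.le (hc0 u)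
      _ = c u ^ 2 := (sq (c u)).symm
  have hcib : ∀ u ∈ Ioc 0 τ₀, |(c u)⁻¹| ≤ θ⁻¹ := by
    intro u hu
    rw [abs_of_nonneg (inv_nonneg.mpr (hc0 u))]
    exact inv_anti₀ hθ (hcθ u hu)
  have hIci : ∀ r : ℝ, (μ (Ici r)).toReal = c r := by
    intro r
    have hIio : μ (Iio r) = μ (Iic r) := by
      have h2 : Iic r = Iio r ∪ {r} := by ext x; simp [le_iff_lt_or_eq]
      apply le_antisymm (measure_mono Iio_subset_Iic_self)
      rw [h2]
      refine le_trans (measure_union_le _ _) ?_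
      rw [measure_singleton]
      simp
    have h1 : μ (Ici r) = 1 - μ (Iic r) := by
      have := measure_compl (μ := μ) measurableSet_Iio (measure_ne_top μ (Iio r))
      rw [compl_Iio] at this
      rw [this, measure_univ, hIio]
    rw [h1, ENNReal.toReal_sub_of_le
      (le_trans (measure_mono (subset_univ (Iic r))) (le_of_eq measure_univ)) ENNReal.one_ne_top]
    simp [hcdef, hHdeq r]
  -- notation-level abbreviations
  obtain ⟨kk, hkkdef⟩ : ∃ f : ℝ → ℝ,
      f = fun s => ∫ u in Ioc 0 t, (if u ≤ s then 1 else 0) / c u ^ 2 ∂η := ⟨_, rfl⟩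
  obtain ⟨kI, hkIdef⟩ : ∃ f : ℝ → ℝ,
      f = fun s => ∫ u in Ioi 0, (if u ≤ s then 1 else 0) / c u ^ 2 ∂η := ⟨_, rfl⟩
  obtain ⟨K, hKdef⟩ : ∃ f : ℝ → ℝ,
      f = fun r => ∫ v in Ioc 0 r, 1 / c v ^ 2 ∂η := ⟨_, rfl⟩
  obtain ⟨Gb, hGbdef⟩ : ∃ f : ℝ → ℝ,
      f = fun u => ∫ s in Ioc 0 τ₀, (if u ≤ s then 1 else 0) * (c s)⁻¹ ∂η := ⟨_, rfl⟩
  -- measurability of basic integrands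
  have hjm : ∀ s : ℝ, Measurable (fun u => (if u ≤ s then 1 else 0) / c u ^ 2) := by
    intro s
    exact (Measurable.ite measurableSet_Iic measurable_const measurable_const).div
      ((hcm.pow_const 2))
  have hc1 : ∀ r, c r ≤ 1 := by
    intro r
    have := (hHd01 r).1
    simp only [hcdef]
    linarith
  have hcθ' : ∀ u ∈ Icc (0:ℝ) τ₀, θ ≤ c u := hθle
  have hjabs : ∀ (s u : ℝ), u ∈ Icc (0:ℝ) τ₀ →
      |(if u ≤ s then (1:ℝ) else 0) / c u ^ 2| ≤ θ⁻¹ * θ⁻¹ := by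
    intro s u hu
    have h1 := hcθ' u hu
    have h2 : θ * θ ≤ c u ^ 2 := by
      rw [sq]
      exact mul_le_mul h1 h1 hθ.le (hc0 u)
    rw [abs_div, abs_of_nonneg (by positivity : (0:ℝ) ≤ c u ^ 2), ← mul_inv]
    calc |if u ≤ s then (1:ℝ) else 0| / c u ^ 2 ≤ 1 / c u ^ 2 := by
          gcongr
          split_ifs <;> simp
      _ ≤ (θ * θ)⁻¹ := by
          rw [one_div]
          exact inv_anti₀ (by positivity) h2
  -- integrability generator over η
  have hbint : ∀ (f : ℝ → ℝ) (C : ℝ), Measurable f → (∀ u ∈ Icc (0:ℝ) τ₀, |f u| ≤ C) →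
      ∀ (A : Set ℝ), IntegrableOn f A η := by
    intro f C hm hb A
    refine Integrable.mono' (integrable_const C) hm.aestronglyMeasurable.restrict ?_
    refine ae_restrict_of_ae ?_
    filter_upwards [hηae] with u hu
    rw [Real.norm_eq_abs]
    exact hb u ⟨hu.1.le, hu.2⟩
  have hη1 : ∀ A : Set ℝ, (η A).toReal ≤ 1 := by
    intro A
    have h1 : η A ≤ 1 := by
      refine le_trans (measure_mono (subset_univ A)) ?_
      refine le_trans (hημ MeasurableSet.univ) (le_of_eq measure_univ)
    exact le_trans (ENNReal.toReal_mono ENNReal.one_ne_top h1) (by simp)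
  -- boundedness of set integrals over η
  have hsib : ∀ (f : ℝ → ℝ) (C : ℝ) (A : Set ℝ), A ⊆ Icc 0 τ₀ → 0 ≤ C →
      Measurable f → (∀ u ∈ Icc (0:ℝ) τ₀, |f u| ≤ C) → |∫ u in A, f u ∂η| ≤ C := by
    intro f C A hA hC hm hb
    rw [← Real.norm_eq_abs]
    calc ‖∫ u in A, f u ∂η‖ ≤ C * (η A).toReal := by
          refine norm_setIntegral_le_of_norm_le_const (measure_lt_top η A) ?_
          intro x hx
          rw [Real.norm_eq_abs]
          exact hb x (hA hx)
      _ ≤ C * 1 := by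
          exact mul_le_mul_of_nonneg_left (hη1 A) hC
      _ = C := mul_one C
  -- kk, kI facts
  have hkkint : ∀ (s : ℝ) (A : Set ℝ),
      IntegrableOn (fun u => (if u ≤ s then 1 else 0) / c u ^ 2) A η :=
    fun s A => hbint _ (θ⁻¹ * θ⁻¹) (hjm s) (fun u hu => hjabs s u hu) A
  have hkkmono : Monotone kk := by
    intro s1 s2 h
    rw [hkkdef]
    refine integral_mono (hkkint s1 _) (hkkint s2 _) (fun u => ?_)
    simp only
    by_cases hcu : c u ^ 2 = 0
    · rw [hcu, div_zero, div_zero]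
    · have hpos : 0 < c u ^ 2 := lt_of_le_of_ne (by positivity) (Ne.symm hcu)
      gcongr
      split_ifs with h1 h2
      · exact le_refl 1
      · exact absurd (le_trans h1 h) h2
      · norm_num
      · exact le_refl (0:ℝ)
  have hkkm : Measurable kk := hkkmono.measurable
  have hresτ : η.restrict (Ioi 0) = η.restrict (Ioc 0 τ₀) := by
    refine Measure.restrict_congr_set ?_
    rw [Filter.eventuallyEq_set]
    filter_upwards [hηae] with u hu
    simp only [mem_Ioi, mem_Ioc]
    exact ⟨fun h => ⟨h, hu.2⟩, fun h => h.1⟩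
  have hkIeq : ∀ s, kI s = ∫ u in Ioc 0 τ₀, (if u ≤ s then 1 else 0) / c u ^ 2 ∂η := by
    intro s
    rw [hkIdef]
    simp only
    rw [hresτ]
  have hkImono : Monotone kI := by
    intro s1 s2 h
    rw [hkIeq, hkIeq]
    refine integral_mono (hkkint s1 _) (hkkint s2 _) (fun u => ?_)
    simp only
    by_cases hcu : c u ^ 2 = 0
    · rw [hcu, div_zero, div_zero]
    · have hpos : 0 < c u ^ 2 := lt_of_le_of_ne (by positivity) (Ne.symm hcu)
      gcongr
      split_ifs with h1 h2
      · exact le_refl 1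
      · exact absurd (le_trans h1 h) h2
      · norm_num
      · exact le_refl (0:ℝ)
  have hkIm : Measurable kI := hkImono.measurable
  have hIocIcc : Ioc (0:ℝ) t ⊆ Icc 0 τ₀ := fun x hx => ⟨hx.1.le, le_trans hx.2 htτ⟩
  have hkkb : ∀ s, |kk s| ≤ θ⁻¹ * θ⁻¹ := by
    intro s
    rw [hkkdef]
    exact hsib _ _ _ hIocIcc (by positivity) (hjm s) (fun u hu => hjabs s u hu)
  have hkIb : ∀ s, |kI s| ≤ θ⁻¹ * θ⁻¹ := by
    intro s
    rw [hkIeq]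
    exact hsib _ _ _ Ioc_subset_Icc_self (by positivity) (hjm s) (fun u hu => hjabs s u hu)
  have hkIkk : ∀ s, s ≤ t → kI s = kk s := by
    intro s hs
    rw [hkIeq, hkkdef]
    simp only
    rw [← Set.Ioc_union_Ioc_eq_Ioc ht0 htτ,
      setIntegral_union (Set.Ioc_disjoint_Ioc_of_le le_rfl) measurableSet_Ioc (hkkint s _) (hkkint s _)]
    have hz : ∫ u in Ioc t τ₀, (if u ≤ s then 1 else 0) / c u ^ 2 ∂η = 0 := by
      rw [setIntegral_congr_fun measurableSet_Ioc (g := fun _ => (0:ℝ))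
        (fun u hu => by rw [if_neg (by linarith [hu.1] : ¬ u ≤ s), zero_div])]
      exact integral_zero _ _
    rw [hz, add_zero]
  have hkk0 : ∀ s, s ≤ 0 → kk s = 0 := by
    intro s hs
    rw [hkkdef]
    simp only
    rw [setIntegral_congr_fun measurableSet_Ioc (g := fun _ => (0:ℝ))
      (fun u hu => by rw [if_neg (by linarith [hu.1] : ¬ u ≤ s), zero_div])]
    exact integral_zero _ _
  -- K facts
  have hwint : ∀ A : Set ℝ, IntegrableOn (fun v => 1 / c v ^ 2) A η := by
    refine hbint _ (θ⁻¹ * θ⁻¹) ?_ ?_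
    · simp only [one_div]
      exact (hcm.pow_const 2).inv
    · intro u hu
      have := hjabs u u hu
      rwa [if_pos (le_refl u)] at this
  have hKmono : Monotone K := by
    intro r1 r2 h
    rw [hKdef]
    simp only
    refine setIntegral_mono_set (hwint _) ?_ ?_
    · refine ae_of_all _ (fun v => by positivity)
    · exact HasSubset.Subset.eventuallyLE (Set.Ioc_subset_Ioc_right h)
  have hKm : Measurable K := hKmono.measurable
  have hKb : ∀ r ∈ Icc (0:ℝ) τ₀, |K r| ≤ θ⁻¹ * θ⁻¹ := by
    intro r hr
    rw [hKdef]
    refine hsib _ _ _ (fun x hx => ⟨hx.1.le, le_trans hx.2 hr.2⟩) (by positivity)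
      ?_ ?_
    · simp only [one_div]
      exact (hcm.pow_const 2).inv
    · intro u hu
      have := hjabs u u hu
      rwa [if_pos (le_refl u)] at this
  have hkkK : ∀ s ∈ Ioc (0:ℝ) t, kk s = K s := by
    intro s hs
    rw [hkkdef, hKdef]
    simp only
    rw [← Set.Ioc_union_Ioc_eq_Ioc hs.1.le hs.2,
      setIntegral_union (Set.Ioc_disjoint_Ioc_of_le le_rfl) measurableSet_Ioc (hkkint s _) (hkkint s _)]
    have hz : ∫ u in Ioc s t, (if u ≤ s then 1 else 0) / c u ^ 2 ∂η = 0 := by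
      rw [setIntegral_congr_fun measurableSet_Ioc (g := fun _ => (0:ℝ))
        (fun u hu => by rw [if_neg (by linarith [hu.1] : ¬ u ≤ s), zero_div])]
      exact integral_zero _ _
    rw [hz, add_zero]
    exact setIntegral_congr_fun measurableSet_Ioc
      (fun u hu => by rw [if_pos hu.2])
  -- Gb facts
  have hGbintg : ∀ u : ℝ, Measurable (fun s => (if u ≤ s then (1:ℝ) else 0) * (c s)⁻¹) :=
    fun u => (Measurable.ite measurableSet_Ici measurable_const measurable_const).mul hcm.inv
  have hGbintb : ∀ (u : ℝ), ∀ x ∈ Icc (0:ℝ) τ₀,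
      |(if u ≤ x then (1:ℝ) else 0) * (c x)⁻¹| ≤ 1 * θ⁻¹ := by
    intro u x hx
    rw [abs_mul]
    refine mul_le_mul ?_ ?_ (abs_nonneg _) one_pos.le
    · split_ifs <;> simp
    · rw [abs_of_nonneg (inv_nonneg.mpr (hc0 x))]
      exact inv_anti₀ hθ (hcθ' x hx)
  have hGbanti : Antitone Gb := by
    intro u1 u2 h
    rw [hGbdef]
    simp only
    refine integral_mono (hbint _ (1 * θ⁻¹) (hGbintg u2) (hGbintb u2) _)
      (hbint _ (1 * θ⁻¹) (hGbintg u1) (hGbintb u1) _) (fun x => ?_)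
    simp only
    refine mul_le_mul_of_nonneg_right ?_ (inv_nonneg.mpr (hc0 x))
    split_ifs with h1 h2
    · exact le_refl 1
    · exact absurd (le_trans h h1) h2
    · norm_num
    · exact le_refl (0:ℝ)
  have hGbm : Measurable Gb := hGbanti.measurable
  have hGbb : ∀ u, |Gb u| ≤ 1 * θ⁻¹ := by
    intro u
    rw [hGbdef]
    exact hsib _ _ _ Ioc_subset_Icc_self (by positivity) (hGbintg u) (hGbintb u)
  -- change of variables
  have hL1 : ∀ g : ℝ → ℝ, Measurable g →
      (∫ q, (if q.2 = true then g q.1 else 0) ∂νx) = ∫ s, g s ∂η := by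
    intro g hg
    have h1 : (fun q : ℝ × Bool => if q.2 = true then g q.1 else 0) =
        {q : ℝ × Bool | q.2 = true}.indicator (fun q => g q.1) := by
      ext q
      rw [indicator_apply]
      simp only [mem_setOf_eq]
    have h2 : ∫ s, g s ∂η = ∫ q, g q.1 ∂(νx.restrict {q : ℝ × Bool | q.2 = true}) := by
      rw [hη, H1m]
      exact integral_map measurable_fst.aemeasurable hg.aestronglyMeasurable
    rw [h1, integral_indicator hS, h2]
  have hL2 : ∀ g : ℝ → ℝ, Measurable g → (∫ q, g q.1 ∂νx) = ∫ s, g s ∂μ := by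
    intro g hg
    rw [hμ]
    exact (integral_map measurable_fst.aemeasurable hg.aestronglyMeasurable).symm
  -- a.e. facts over νx
  have haν : ∀ᵐ q ∂νx, (0:ℝ) ≤ q.1 := by
    rw [ae_iff]
    refine measure_mono_null (fun q hq => ?_) hsuppx
    simp only [not_le, mem_setOf_eq] at hq ⊢
    exact hq
  have hbν : ∀ᵐ q ∂νx, q.2 = true → q.1 ≤ τ₀ := by
    rw [ae_iff]
    have h0 : νx (Prod.fst ⁻¹' (Ioi τ₀) ∩ {q : ℝ × Bool | q.2 = true}) = 0 := by
      rw [← hηapp measurableSet_Ioi]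
      exact hτ
    refine measure_mono_null (fun q hq => ?_) h0
    simp only [mem_setOf_eq] at hq ⊢
    push_neg at hq
    exact ⟨hq.2, hq.1⟩
  -- the four pieces
  obtain ⟨P1, hP1def⟩ : ∃ f : ℝ × Bool → ℝ,
      f = fun q => (if q.1 ≤ t ∧ q.2 = true then 1 else 0) / c q.1 ^ 2 := ⟨_, rfl⟩
  obtain ⟨P2, hP2def⟩ : ∃ f : ℝ × Bool → ℝ,
      f = fun q => (if q.1 ≤ t ∧ q.2 = true then 1 else 0) / c q.1 * kI q.1 := ⟨_, rfl⟩
  obtain ⟨P3, hP3def⟩ : ∃ f : ℝ × Bool → ℝ,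
      f = fun q => (if q.2 = true then 1 else 0) / c q.1 * kk q.1 := ⟨_, rfl⟩
  obtain ⟨P4, hP4def⟩ : ∃ f : ℝ × Bool → ℝ,
      f = fun q => kk q.1 * kI q.1 := ⟨_, rfl⟩
  -- pointwise expansion
  have hexp : ∀ q : ℝ × Bool, xi νx t q.1 q.2 * xiInf νx q.1 q.2 =
      P1 q - P2 q - P3 q + P4 q := by
    rintro ⟨s, d⟩
    have hxi : xi νx t s d = (if s ≤ t ∧ d = true then 1 else 0) / c s - kk s := by
      rw [xi, hkkdef]
    have hxiI : xiInf νx s d = (if d = true then 1 else 0) / c s - kI s := by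
      rw [xiInf, hkIdef]
    rw [hxi, hxiI, hP1def, hP2def, hP3def, hP4def]
    simp only [hcdef]
    set x : ℝ := 1 - Hd νx s with hx
    have hc2 : (1:ℝ) / x ^ 2 = (1 / x) * (1 / x) := by
      rw [one_div, one_div, ← mul_inv, sq]
    cases d
    · simp only [Bool.false_eq_true, and_false, if_false]
      ring
    · simp only [eq_self_iff_true, and_true, if_true]
      split_ifs <;> first | (rw [hc2]; ring) | ring
  -- measurability of pieces
  have hsetm : MeasurableSet {q : ℝ × Bool | q.1 ≤ t ∧ q.2 = true} := by
    have : {q : ℝ × Bool | q.1 ≤ t ∧ q.2 = true} = (Iic t ×ˢ ({true} : Set Bool)) := by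
      ext q
      simp only [mem_setOf_eq, Set.mem_prod, mem_Iic, mem_singleton_iff]
    rw [this]
    exact measurableSet_Iic.prod (measurableSet_singleton _)
  have hP1m : Measurable P1 := by
    rw [hP1def]
    exact (Measurable.ite hsetm measurable_const measurable_const).div
      ((hcm.comp measurable_fst).pow_const 2)
  have hP2m : Measurable P2 := by
    rw [hP2def]
    exact ((Measurable.ite hsetm measurable_const measurable_const).div
      (hcm.comp measurable_fst)).mul (hkIm.comp measurable_fst)
  have hP3m : Measurable P3 := by
    rw [hP3def]
    exact ((Measurable.ite hS measurable_const measurable_const).div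
      (hcm.comp measurable_fst)).mul (hkkm.comp measurable_fst)
  have hP4m : Measurable P4 := by
    rw [hP4def]
    exact (hkkm.comp measurable_fst).mul (hkIm.comp measurable_fst)
  -- pointwise-style bounds
  have hdiv1 : ∀ (s : ℝ) (P : Prop) [Decidable P], s ∈ Icc (0:ℝ) τ₀ →
      |(if P then (1:ℝ) else 0) / c s| ≤ θ⁻¹ := by
    intro s P _ hs
    rw [abs_div, abs_of_nonneg (hc0 s)]
    calc |if P then (1:ℝ) else 0| / c s ≤ 1 / c s := by
          gcongr
          · exact hc0 s
          · split_ifs <;> simp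
      _ ≤ θ⁻¹ := by
          rw [one_div]
          exact inv_anti₀ hθ (hcθ' s hs)
  -- integrability of P1..P4 over νx
  have hP1int : Integrable P1 νx := by
    refine Integrable.mono' (integrable_const (θ⁻¹ * θ⁻¹)) hP1m.aestronglyMeasurable ?_
    filter_upwards [haν] with q hq
    rw [Real.norm_eq_abs, hP1def]
    simp only
    by_cases h : q.1 ≤ t ∧ q.2 = true
    · have : q.1 ∈ Icc (0:ℝ) τ₀ := ⟨hq, le_trans h.1 htτ⟩
      have := hjabs q.1 q.1 this
      rw [if_pos (le_refl q.1)] at this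
      rw [if_pos h]
      exact this
    · rw [if_neg h, zero_div, abs_zero]
      positivity
  have hP2int : Integrable P2 νx := by
    refine Integrable.mono' (integrable_const (θ⁻¹ * (θ⁻¹ * θ⁻¹)))
      hP2m.aestronglyMeasurable ?_
    filter_upwards [haν] with q hq
    rw [Real.norm_eq_abs, hP2def]
    simp only
    rw [abs_mul]
    by_cases h : q.1 ≤ t ∧ q.2 = true
    · refine mul_le_mul (hdiv1 q.1 _ ⟨hq, le_trans h.1 htτ⟩) (hkIb q.1) (abs_nonneg _)
        (by positivity)
    · rw [if_neg h, zero_div, abs_zero, zero_mul]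
      positivity
  have hP3int : Integrable P3 νx := by
    refine Integrable.mono' (integrable_const (θ⁻¹ * (θ⁻¹ * θ⁻¹)))
      hP3m.aestronglyMeasurable ?_
    filter_upwards [haν, hbν] with q hq hq2
    rw [Real.norm_eq_abs, hP3def]
    simp only
    rw [abs_mul]
    by_cases h : q.2 = true
    · refine mul_le_mul (hdiv1 q.1 _ ⟨hq, hq2 h⟩) (hkkb q.1) (abs_nonneg _)
        (by positivity)
    · rw [if_neg h, zero_div, abs_zero, zero_mul]
      positivity
  have hP4int : Integrable P4 νx := by
    refine Integrable.mono' (integrable_const ((θ⁻¹ * θ⁻¹) * (θ⁻¹ * θ⁻¹)))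
      hP4m.aestronglyMeasurable ?_
    refine ae_of_all _ (fun q => ?_)
    rw [Real.norm_eq_abs, hP4def]
    simp only
    rw [abs_mul]
    exact mul_le_mul (hkkb q.1) (hkIb q.1) (abs_nonneg _) (by positivity)
  -- split the integral
  have hsplit : (∫ q, xi νx t q.1 q.2 * xiInf νx q.1 q.2 ∂νx) =
      (∫ q, P1 q ∂νx) - (∫ q, P2 q ∂νx) - (∫ q, P3 q ∂νx) + (∫ q, P4 q ∂νx) := by
    rw [integral_congr_ae (ae_of_all _ hexp)]
    have hA : Integrable (fun q => P1 q - P2 q) νx := hP1int.sub hP2int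
    have hB : Integrable (fun q => P1 q - P2 q - P3 q) νx := hA.sub hP3int
    rw [integral_add hB hP4int, integral_sub hA hP3int, integral_sub hP1int hP2int]
  have hresIic : η.restrict (Iic t) = η.restrict (Ioc 0 t) := by
    refine Measure.restrict_congr_set ?_
    rw [Filter.eventuallyEq_set]
    filter_upwards [hηae] with u hu
    simp only [mem_Iic, mem_Ioc]
    exact ⟨fun h => ⟨hu.1, h⟩, fun h => h.2⟩
  -- T1
  have hT1 : (∫ q, P1 q ∂νx) = ∫ v in Ioc 0 t, 1 / c v ^ 2 ∂η := by
    have h1 : P1 = fun q : ℝ × Bool =>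
        if q.2 = true then (if q.1 ≤ t then 1 else 0) / c q.1 ^ 2 else 0 := by
      rw [hP1def]
      funext q
      rcases q with ⟨s, d⟩
      cases d
      · simp [zero_div]
      · simp
    rw [h1, hL1 _ (hjm t)]
    have h2 : (fun s => (if s ≤ t then (1:ℝ) else 0) / c s ^ 2) =
        (Iic t).indicator (fun s => 1 / c s ^ 2) := by
      funext s
      by_cases h : s ≤ t
      · rw [if_pos h, indicator_of_mem (mem_Iic.mpr h)]
      · rw [if_neg h, indicator_of_notMem (fun hc => h (mem_Iic.mp hc)), zero_div]
    rw [h2, integral_indicator measurableSet_Iic, hresIic]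
  -- T2
  have hT2 : (∫ q, P2 q ∂νx) = ∫ s in Ioc 0 t, (c s)⁻¹ * K s ∂η := by
    have h1 : P2 = fun q : ℝ × Bool =>
        if q.2 = true then (if q.1 ≤ t then 1 else 0) / c q.1 * kI q.1 else 0 := by
      rw [hP2def]
      funext q
      rcases q with ⟨s, d⟩
      cases d
      · simp [zero_div]
      · simp
    rw [h1, hL1 (fun s => (if s ≤ t then (1:ℝ) else 0) / c s * kI s) (((Measurable.ite measurableSet_Iic measurable_const
      measurable_const).div hcm).mul hkIm)]
    have h2 : (fun s => (if s ≤ t then (1:ℝ) else 0) / c s * kI s) =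
        (Iic t).indicator (fun s => (c s)⁻¹ * kI s) := by
      funext s
      by_cases h : s ≤ t
      · rw [if_pos h, indicator_of_mem (mem_Iic.mpr h), one_div]
      · rw [if_neg h, indicator_of_notMem (fun hc => h (mem_Iic.mp hc)), zero_div, zero_mul]
    rw [h2, integral_indicator measurableSet_Iic, hresIic]
    refine setIntegral_congr_fun measurableSet_Ioc (fun s hs => ?_)
    rw [hkIkk s hs.2, hkkK s hs]
  -- T3
  have hT3pre : (∫ q, P3 q ∂νx) = ∫ s in Ioc 0 τ₀, (c s)⁻¹ * kk s ∂η := by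
    have h1 : P3 = fun q : ℝ × Bool =>
        if q.2 = true then (c q.1)⁻¹ * kk q.1 else 0 := by
      rw [hP3def]
      funext q
      rcases q with ⟨s, d⟩
      cases d
      · simp [zero_div]
      · simp [one_div]
    rw [h1, hL1 (fun s => (c s)⁻¹ * kk s) (hcm.inv.mul hkkm)]
    have hae2 : (fun s => (c s)⁻¹ * kk s) =ᵐ[η]
        (Ioc 0 τ₀).indicator (fun s => (c s)⁻¹ * kk s) := by
      filter_upwards [hηae] with u hu
      rw [indicator_of_mem hu]
    rw [integral_congr_ae hae2, integral_indicator measurableSet_Ioc]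
  -- T4 reduction to μ
  have hT4pre : (∫ q, P4 q ∂νx) = ∫ s, kk s * kI s ∂μ := by
    rw [hP4def]
    exact hL2 _ (hkkm.mul hkIm)
  -- Fubini 1 : T3
  have hw2m : Measurable (fun u : ℝ => 1 / c u ^ 2) := by
    simp only [one_div]
    exact (hcm.pow_const 2).inv
  have hFint1 : Integrable
      (Function.uncurry fun s u => (c s)⁻¹ * ((if u ≤ s then (1:ℝ) else 0) / c u ^ 2))
      ((η.restrict (Ioc 0 τ₀)).prod (η.restrict (Ioc 0 t))) := by
    have hm : Measurable (Function.uncurry fun s u =>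
        (c s)⁻¹ * ((if u ≤ s then (1:ℝ) else 0) / c u ^ 2)) := by
      rw [Function.uncurry_def]
      exact ((hcm.comp measurable_fst).inv).mul
        ((Measurable.ite (measurableSet_le measurable_snd measurable_fst) measurable_const
          measurable_const).div ((hcm.comp measurable_snd).pow_const 2))
    rw [Measure.prod_restrict]
    refine Integrable.mono' (integrable_const (θ⁻¹ * (θ⁻¹ * θ⁻¹)))
      hm.aestronglyMeasurable.restrict ?_
    refine (ae_restrict_iff' (measurableSet_Ioc.prod measurableSet_Ioc)).mpr
      (ae_of_all _ (fun p hp => ?_))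
    rcases hp with ⟨hp1, hp2⟩
    rw [Real.norm_eq_abs, Function.uncurry_def]
    simp only
    rw [abs_mul]
    refine mul_le_mul (hcib p.1 hp1) (hjabs p.1 p.2 (hIocIcc hp2)) (abs_nonneg _)
      (by positivity)
  have hFub1 : (∫ s in Ioc 0 τ₀, (c s)⁻¹ * kk s ∂η) =
      ∫ u in Ioc 0 t, (1 / c u ^ 2) * Gb u ∂η := by
    have hstep : (∫ s in Ioc 0 τ₀, (c s)⁻¹ * kk s ∂η) =
        ∫ s in Ioc 0 τ₀, ∫ u in Ioc 0 t,
          (c s)⁻¹ * ((if u ≤ s then 1 else 0) / c u ^ 2) ∂η ∂η := by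
      refine setIntegral_congr_fun measurableSet_Ioc (fun s _ => ?_)
      rw [hkkdef]
      exact (integral_const_mul _ _).symm
    rw [hstep, integral_integral_swap hFint1]
    refine setIntegral_congr_fun measurableSet_Ioc (fun u hu => ?_)
    have h1 : ∀ s, (c s)⁻¹ * ((if u ≤ s then (1:ℝ) else 0) / c u ^ 2) =
        (1 / c u ^ 2) * ((if u ≤ s then 1 else 0) * (c s)⁻¹) := by
      intro s
      split_ifs <;> ring
    rw [integral_congr_ae (ae_of_all _ h1), integral_const_mul, hGbdef]
  have hT3 : (∫ q, P3 q ∂νx) = ∫ u in Ioc 0 t, (1 / c u ^ 2) * Gb u ∂η := by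
    rw [hT3pre, hFub1]
  -- Fubini 2 : T4, outer
  obtain ⟨M, hMdef⟩ : ∃ f : ℝ → ℝ,
      f = fun u => ∫ s, (if u ≤ s then 1 else 0) * kI s ∂μ := ⟨_, rfl⟩
  have hFint2 : Integrable
      (Function.uncurry fun s u => ((if u ≤ s then (1:ℝ) else 0) / c u ^ 2) * kI s)
      (μ.prod (η.restrict (Ioc 0 t))) := by
    have hm : Measurable (Function.uncurry fun s u =>
        ((if u ≤ s then (1:ℝ) else 0) / c u ^ 2) * kI s) := by
      rw [Function.uncurry_def]
      exact ((Measurable.ite (measurableSet_le measurable_snd measurable_fst) measurable_const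
        measurable_const).div ((hcm.comp measurable_snd).pow_const 2)).mul
        (hkIm.comp measurable_fst)
    rw [show μ.prod (η.restrict (Ioc 0 t)) =
        (μ.restrict univ).prod (η.restrict (Ioc 0 t)) by rw [Measure.restrict_univ],
      Measure.prod_restrict]
    refine Integrable.mono' (integrable_const ((θ⁻¹ * θ⁻¹) * (θ⁻¹ * θ⁻¹)))
      hm.aestronglyMeasurable.restrict ?_
    refine (ae_restrict_iff' (MeasurableSet.univ.prod measurableSet_Ioc)).mpr
      (ae_of_all _ (fun p hp => ?_))
    rcases hp with ⟨_, hp2⟩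
    rw [Real.norm_eq_abs, Function.uncurry_def]
    simp only
    rw [abs_mul]
    exact mul_le_mul (hjabs p.1 p.2 (hIocIcc hp2)) (hkIb p.1) (abs_nonneg _) (by positivity)
  have hT4a : (∫ s, kk s * kI s ∂μ) = ∫ u in Ioc 0 t, (1 / c u ^ 2) * M u ∂η := by
    have hstep : ∀ s, kk s * kI s = ∫ u in Ioc 0 t,
        ((if u ≤ s then 1 else 0) / c u ^ 2) * kI s ∂η := by
      intro s
      rw [hkkdef]
      exact (integral_mul_const _ _).symm
    rw [integral_congr_ae (ae_of_all _ hstep), integral_integral_swap hFint2]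
    refine setIntegral_congr_fun measurableSet_Ioc (fun u hu => ?_)
    have h1 : ∀ s, ((if u ≤ s then (1:ℝ) else 0) / c u ^ 2) * kI s =
        (1 / c u ^ 2) * ((if u ≤ s then 1 else 0) * kI s) := by
      intro s
      split_ifs <;> ring
    rw [integral_congr_ae (ae_of_all _ h1), integral_const_mul, hMdef]
  -- inner Fubini for M
  have hMval : ∀ u ∈ Ioc (0:ℝ) t, M u = K u * c u + Gb u := by
    intro u hu
    have huτ : u ≤ τ₀ := le_trans hu.2 htτ
    have hFint3 : Integrable
        (Function.uncurry fun s v => (if u ≤ s then (1:ℝ) else 0) *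
          ((if v ≤ s then (1:ℝ) else 0) / c v ^ 2))
        (μ.prod (η.restrict (Ioc 0 τ₀))) := by
      have hm : Measurable (Function.uncurry fun s v => (if u ≤ s then (1:ℝ) else 0) *
          ((if v ≤ s then (1:ℝ) else 0) / c v ^ 2)) := by
        rw [Function.uncurry_def]
        refine Measurable.mul ?_ ?_
        · exact (Measurable.ite (measurableSet_le measurable_const measurable_fst)
            measurable_const measurable_const)
        · exact (Measurable.ite (measurableSet_le measurable_snd measurable_fst)
            measurable_const measurable_const).div ((hcm.comp measurable_snd).pow_const 2)
      rw [show μ.prod (η.restrict (Ioc 0 τ₀)) =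
          (μ.restrict univ).prod (η.restrict (Ioc 0 τ₀)) by rw [Measure.restrict_univ],
        Measure.prod_restrict]
      refine Integrable.mono' (integrable_const (1 * (θ⁻¹ * θ⁻¹)))
        hm.aestronglyMeasurable.restrict ?_
      refine (ae_restrict_iff' (MeasurableSet.univ.prod measurableSet_Ioc)).mpr
        (ae_of_all _ (fun p hp => ?_))
      rcases hp with ⟨_, hp2⟩
      rw [Real.norm_eq_abs, Function.uncurry_def]
      simp only
      rw [abs_mul]
      refine mul_le_mul ?_ (hjabs p.1 p.2 (Ioc_subset_Icc_self hp2)) (abs_nonneg _)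
        one_pos.le
      split_ifs <;> simp
    have hstep : ∀ s, (if u ≤ s then (1:ℝ) else 0) * kI s =
        ∫ v in Ioc 0 τ₀, (if u ≤ s then 1 else 0) *
          ((if v ≤ s then 1 else 0) / c v ^ 2) ∂η := by
      intro s
      rw [hkIeq]
      exact (integral_const_mul _ _).symm
    rw [hMdef]
    simp only
    rw [integral_congr_ae (ae_of_all _ hstep), integral_integral_swap hFint3]
    have hinner : EqOn (fun v => ∫ s, (if u ≤ s then (1:ℝ) else 0) *
        ((if v ≤ s then (1:ℝ) else 0) / c v ^ 2) ∂μ)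
        (fun v => (1 / c v ^ 2) * c (max u v)) (Ioc 0 τ₀) := by
      intro v hv
      simp only
      have h1 : ∀ s, (if u ≤ s then (1:ℝ) else 0) * ((if v ≤ s then (1:ℝ) else 0) / c v ^ 2) =
          (1 / c v ^ 2) * (if max u v ≤ s then 1 else 0) := by
        intro s
        by_cases h1 : u ≤ s <;> by_cases h2 : v ≤ s
        · rw [if_pos h1, if_pos h2, if_pos (max_le_iff.mpr ⟨h1, h2⟩)]; ring
        · rw [if_pos h1, if_neg h2,
            if_neg (fun hc => h2 (le_trans (le_max_right u v) hc))]; ring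
        · rw [if_neg h1, if_neg (fun hc => h1 (le_trans (le_max_left u v) hc))]; ring
        · rw [if_neg h1, if_neg (fun hc => h1 (le_trans (le_max_left u v) hc))]; ring
      rw [integral_congr_ae (ae_of_all _ h1), integral_const_mul]
      congr 1
      have h2 : (fun s => if max u v ≤ s then (1:ℝ) else 0) =
          (Ici (max u v)).indicator (fun _ => 1) := by
        funext s
        by_cases h : max u v ≤ s
        · rw [if_pos h, indicator_of_mem (mem_Ici.mpr h)]
        · rw [if_neg h, indicator_of_notMem (fun hc => h (mem_Ici.mp hc))]
      rw [h2, integral_indicator measurableSet_Ici, setIntegral_const, smul_eq_mul,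
        mul_one]
      exact hIci _
    rw [setIntegral_congr_fun measurableSet_Ioc hinner]
    -- split the range at u
    have hmaxm : Measurable (fun v : ℝ => (1 / c v ^ 2) * c (max u v)) :=
      hw2m.mul (hcm.comp (measurable_const.max measurable_id))
    have hmaxb : ∀ x ∈ Icc (0:ℝ) τ₀, |(1 / c x ^ 2) * c (max u x)| ≤ (θ⁻¹ * θ⁻¹) * 1 := by
      intro x hx
      rw [abs_mul]
      refine mul_le_mul ?_ ?_ (abs_nonneg _) (by positivity)
      · have := hjabs x x hx
        rwa [if_pos (le_refl x)] at this
      · rw [abs_of_nonneg (hc0 _)]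
        exact hc1 _
    rw [← Set.Ioc_union_Ioc_eq_Ioc hu.1.le huτ,
      setIntegral_union (Set.Ioc_disjoint_Ioc_of_le le_rfl) measurableSet_Ioc
        (hbint _ _ hmaxm hmaxb _) (hbint _ _ hmaxm hmaxb _)]
    congr 1
    · rw [setIntegral_congr_fun measurableSet_Ioc
        (g := fun v => (1 / c v ^ 2) * c u) (fun v hv => by rw [max_eq_left hv.2]),
        integral_mul_const, hKdef]
    · rw [hGbdef]
      simp only
      have h2 : (fun s => (if u ≤ s then (1:ℝ) else 0) * (c s)⁻¹) =
          (Ici u).indicator (fun s => (c s)⁻¹) := by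
        funext s
        by_cases h : u ≤ s
        · rw [if_pos h, indicator_of_mem (mem_Ici.mpr h), one_mul]
        · rw [if_neg h, indicator_of_notMem (fun hc => h (mem_Ici.mp hc)), zero_mul]
      rw [h2, setIntegral_indicator measurableSet_Ici]
      have h3 : Ioc 0 τ₀ ∩ Ici u = Icc u τ₀ := by
        ext x
        simp only [mem_inter_iff, mem_Ioc, mem_Ici, mem_Icc]
        constructor
        · rintro ⟨⟨_, h2'⟩, h3'⟩
          exact ⟨h3', h2'⟩
        · rintro ⟨h1', h2'⟩
          exact ⟨⟨lt_of_lt_of_le hu.1 h1', h2'⟩, h1'⟩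
      rw [h3, integral_Icc_eq_integral_Ioc]
      refine (setIntegral_congr_fun measurableSet_Ioc (fun v hv => ?_)).symm
      have hne : c v ≠ 0 :=
        ne_of_gt (lt_of_lt_of_le hθ (hcθ' v ⟨le_trans hu.1.le hv.1.le, hv.2⟩))
      rw [max_eq_right hv.1.le, one_div, sq, mul_inv, mul_assoc, inv_mul_cancel₀ hne, mul_one]
  have hT4 : (∫ q, P4 q ∂νx) =
      ∫ u in Ioc 0 t, (1 / c u ^ 2) * (K u * c u + Gb u) ∂η := by
    rw [hT4pre, hT4a]
    exact setIntegral_congr_fun measurableSet_Ioc (fun u hu => by rw [hMval u hu])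
  have hE4split : (∫ u in Ioc 0 t, (1 / c u ^ 2) * (K u * c u + Gb u) ∂η) =
      (∫ u in Ioc 0 t, (c u)⁻¹ * K u ∂η) + ∫ u in Ioc 0 t, (1 / c u ^ 2) * Gb u ∂η := by
    have h1 : EqOn (fun u => (1 / c u ^ 2) * (K u * c u + Gb u))
        (fun u => (c u)⁻¹ * K u + (1 / c u ^ 2) * Gb u) (Ioc 0 t) := by
      intro u hu
      simp only
      have hne : c u ≠ 0 :=
        ne_of_gt (lt_of_lt_of_le hθ (hcθ' u (hIocIcc hu)))
      have h2 : (1 / c u ^ 2) * (K u * c u) = (c u)⁻¹ * K u := by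
        rw [one_div, sq, mul_inv]
        calc (c u)⁻¹ * (c u)⁻¹ * (K u * c u) = (c u)⁻¹ * K u * ((c u)⁻¹ * c u) := by ring
          _ = (c u)⁻¹ * K u := by rw [inv_mul_cancel₀ hne, mul_one]
      rw [mul_add, h2]
    rw [setIntegral_congr_fun measurableSet_Ioc h1]
    refine integral_add ?_ ?_
    · refine hbint (fun u => (c u)⁻¹ * K u) (θ⁻¹ * (θ⁻¹ * θ⁻¹)) (hcm.inv.mul hKm) ?_ _
      intro x hx
      rw [abs_mul]
      refine mul_le_mul ?_ (hKb x hx) (abs_nonneg _) (by positivity)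
      rw [abs_of_nonneg (inv_nonneg.mpr (hc0 x))]
      exact inv_anti₀ hθ (hcθ' x hx)
    · refine hbint (fun u => (1 / c u ^ 2) * Gb u) ((θ⁻¹ * θ⁻¹) * (1 * θ⁻¹)) (hw2m.mul hGbm) ?_ _
      intro x hx
      rw [abs_mul]
      refine mul_le_mul ?_ (hGbb x) (abs_nonneg _) (by positivity)
      have := hjabs x x hx
      rwa [if_pos (le_refl x)] at this
  show (∫ q, xi νx t q.1 q.2 * xiInf νx q.1 q.2 ∂νx) = ∫ v in Ioc 0 t, 1 / c v ^ 2 ∂η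
  rw [hsplit, hT1, hT2, hT3, hT4, hE4split]
  ring

end Stmt5
end

section
/- Let ν_y and ν_x be probability measures on ℝ × {0,1}. Then ∫ ξ_x(s,d,t)² dν_y(s,d) = A + B − 2C, where A = ∫_{(0,t]} dH¹_y(v)/(1 − H_x(v))², B = 2 ∫_{(0,t]} (1 − H_x(v))^{−2} ( ∫_{[v,t]} (1 − H_y(w)) (1 − H_x(w))^{−2} dH¹_x(w) ) dH¹_x(v), and C = ∫_{(0,t]} (1 − H_x(u))^{−2} ( ∫_{[u,t]} dH¹_y(v)/(1 − H_x(v)) ) dH¹_x(u). -/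
open MeasureTheory Set

namespace Stmt6

/-- First-coordinate distribution function `H_ν(t) = ν((-∞,t] × {0,1})`. -/
noncomputable def Hd (ν : Measure (ℝ × Bool)) (t : ℝ) : ℝ :=
  (ν (Iic t ×ˢ (univ : Set Bool))).toReal

/-- Subdistribution function `H¹_ν(t) = ν((-∞,t] × {1})`. -/
noncomputable def H1d (ν : Measure (ℝ × Bool)) (t : ℝ) : ℝ :=
  (ν (Iic t ×ˢ ({true} : Set Bool))).toReal

/-- Lebesgue–Stieltjes measure of `H¹_ν`: first marginal of `ν` restricted to `δ = 1`. -/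
noncomputable def H1m (ν : Measure (ℝ × Bool)) : Measure ℝ :=
  Measure.map Prod.fst (ν.restrict {q : ℝ × Bool | q.2 = true})

/-- `ξ_x(s,d,t) = 1{s ≤ t, d = 1}/(1-H_x(s)) - ∫_{(0,t]} 1{u ≤ s} dH¹_x(u)/(1-H_x(u))²`. -/
noncomputable def xi (νx : Measure (ℝ × Bool)) (t s : ℝ) (d : Bool) : ℝ :=
  (if s ≤ t ∧ d = true then 1 else 0) / (1 - Hd νx s) -
    ∫ u in Ioc 0 t, (if u ≤ s then 1 else 0) / (1 - Hd νx u) ^ 2 ∂(H1m νx)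

/-! ### Auxiliary definitions -/

noncomputable def phi (νx : Measure (ℝ × Bool)) (u : ℝ) : ℝ := 1 / (1 - Hd νx u) ^ 2

noncomputable def kk (νx : Measure (ℝ × Bool)) (u s : ℝ) : ℝ :=
  (if u ≤ s then 1 else 0) * phi νx u

noncomputable def gg (νx : Measure (ℝ × Bool)) (t s : ℝ) : ℝ :=
  ∫ u in Ioc 0 t, (if u ≤ s then 1 else 0) / (1 - Hd νx u) ^ 2 ∂(H1m νx)

noncomputable def ff (νx : Measure (ℝ × Bool)) (t : ℝ) (q : ℝ × Bool) : ℝ :=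
  (if q.1 ≤ t ∧ q.2 = true then 1 else 0) / (1 - Hd νx q.1)

/-! ### Basic measure lemmas -/

lemma sing_null (μ : Measure ℝ) [IsFiniteMeasure μ]
    (h : Continuous fun r => (μ (Iic r)).toReal) (a : ℝ) : μ {a} = 0 := by
  have hfin : ∀ s : Set ℝ, μ s ≠ ⊤ := fun s => measure_ne_top μ s
  have key : ∀ ε > (0:ℝ), (μ {a}).toReal ≤ ε := by
    intro ε hε
    have hc : ContinuousAt (fun r => (μ (Iic r)).toReal) a := h.continuousAt
    obtain ⟨δ, hδ, hball⟩ := Metric.continuousAt_iff.mp hc ε hε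
    set b := a - δ/2 with hb
    have hba : b < a := by simp [hb]; positivity
    have hdist : dist b a < δ := by
      simp [hb, Real.dist_eq]
      rw [abs_of_nonneg (by positivity)]
      linarith
    have hlt : |(μ (Iic b)).toReal - (μ (Iic a)).toReal| < ε := by
      simpa [Real.dist_eq] using hball hdist
    have hsplit : μ (Iic a) = μ (Iic b) + μ (Ioc b a) := by
      rw [← measure_union (by simp [Set.disjoint_left]; intro x hx h1; linarith) measurableSet_Ioc,
        Iic_union_Ioc_eq_Iic hba.le]
    have h1 : (μ (Ioc b a)).toReal = (μ (Iic a)).toReal - (μ (Iic b)).toReal := by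
      rw [hsplit, ENNReal.toReal_add (hfin _) (hfin _)]; ring
    have h2 : (μ {a}).toReal ≤ (μ (Ioc b a)).toReal := by
      apply ENNReal.toReal_mono (hfin _)
      exact measure_mono (by simp [hba])
    have h3 : (μ (Iic a)).toReal - (μ (Iic b)).toReal < ε := by
      have := abs_lt.mp hlt
      linarith [this.1]
    linarith
  have h0 : (μ {a}).toReal ≤ 0 := le_of_forall_pos_le_add (by intro ε hε; simpa using key ε hε)
  have : (μ {a}).toReal = 0 := le_antisymm h0 ENNReal.toReal_nonneg
  exact (ENNReal.toReal_eq_zero_iff _).mp this |>.resolve_right (hfin _)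

lemma H1m_apply (ν : Measure (ℝ × Bool)) {s : Set ℝ} (hs : MeasurableSet s) :
    H1m ν s = ν (s ×ˢ ({true} : Set Bool)) := by
  rw [H1m, Measure.map_apply measurable_fst hs, Measure.restrict_apply (measurable_fst hs)]
  congr 1

lemma map_fst_apply (ν : Measure (ℝ × Bool)) {s : Set ℝ} (hs : MeasurableSet s) :
    (Measure.map Prod.fst ν) s = ν (s ×ˢ (univ : Set Bool)) := by
  rw [Measure.map_apply measurable_fst hs]
  congr 1
  ext q
  simp

instance (ν : Measure (ℝ × Bool)) [IsFiniteMeasure ν] : IsFiniteMeasure (H1m ν) := by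
  constructor
  rw [H1m]
  calc (Measure.map Prod.fst (ν.restrict {q : ℝ × Bool | q.2 = true})) univ
      ≤ ν univ := by
        rw [Measure.map_apply measurable_fst MeasurableSet.univ]
        exact (Measure.restrict_apply_le _ _).trans (measure_mono (subset_univ _))
    _ < ⊤ := measure_lt_top ν univ

lemma H1m_sing (ν : Measure (ℝ × Bool)) [IsFiniteMeasure ν] (h : Continuous (H1d ν)) (a : ℝ) :
    H1m ν {a} = 0 := by
  apply sing_null
  convert h using 2 with r
  rw [H1m_apply ν measurableSet_Iic, H1d]

lemma map_fst_sing (ν : Measure (ℝ × Bool)) [IsProbabilityMeasure ν] (h : Continuous (Hd ν))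
    (a : ℝ) : (Measure.map Prod.fst ν) {a} = 0 := by
  apply sing_null
  convert h using 2 with r
  rw [map_fst_apply ν measurableSet_Iic, Hd]

lemma H1m_Iic_zero (ν : Measure (ℝ × Bool)) [IsFiniteMeasure ν] (h : Continuous (H1d ν))
    (hsupp : ν {q : ℝ × Bool | q.1 < 0} = 0) : H1m ν (Iic 0) = 0 := by
  have h1 : H1m ν (Iio 0) = 0 := by
    rw [H1m_apply ν measurableSet_Iio]
    refine measure_mono_null ?_ hsupp
    intro q hq; exact hq.1
  have h2 : H1m ν {(0:ℝ)} = 0 := H1m_sing ν h 0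
  have : Iic (0:ℝ) = Iio 0 ∪ {0} := by ext x; simp [le_iff_lt_or_eq]
  rw [this]
  exact measure_union_null h1 h2

lemma Hd_nonneg (ν : Measure (ℝ × Bool)) (s : ℝ) : 0 ≤ Hd ν s := ENNReal.toReal_nonneg

lemma Hd_le_one (ν : Measure (ℝ × Bool)) [IsProbabilityMeasure ν] (s : ℝ) : Hd ν s ≤ 1 := by
  rw [Hd]
  exact ENNReal.toReal_le_of_le_ofReal one_pos.le (by simpa using prob_le_one)

lemma map_fst_Ici (νy : Measure (ℝ × Bool)) [IsProbabilityMeasure νy]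
    (hHyc : Continuous (Hd νy)) (v : ℝ) :
    ((Measure.map Prod.fst νy) (Ici v)).toReal = 1 - Hd νy v := by
  have hprob : IsProbabilityMeasure (Measure.map (Prod.fst : ℝ × Bool → ℝ) νy) :=
    Measure.isProbabilityMeasure_map measurable_fst.aemeasurable
  set ρ := Measure.map (Prod.fst : ℝ × Bool → ℝ) νy
  have h1 : ρ (Iio v) + ρ (Ici v) = 1 := by
    have := measure_add_measure_compl (μ := ρ) (measurableSet_Iio (a := v))
    simpa [compl_Iio] using this
  have h2 : ρ (Iic v) = ρ (Iio v) + ρ {v} := by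
    rw [← measure_union (by simp [Set.disjoint_left]; exact fun a ha => ne_of_lt ha)
      (measurableSet_singleton v)]
    congr 1
    ext x
    simp [le_iff_lt_or_eq]
  have h3 : ρ {v} = 0 := map_fst_sing νy hHyc v
  have h4 : ρ (Iic v) = ρ (Iio v) := by rw [h2, h3, add_zero]
  have hHd : Hd νy v = (ρ (Iic v)).toReal := by rw [map_fst_apply νy measurableSet_Iic]; rfl
  have hfin1 : ρ (Iio v) ≠ ⊤ := measure_ne_top ρ _
  have hfin2 : ρ (Ici v) ≠ ⊤ := measure_ne_top ρ _
  have := congrArg ENNReal.toReal h1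
  rw [ENNReal.toReal_add hfin1 hfin2] at this
  simp only [ENNReal.toReal_one] at this
  rw [hHd, h4]
  linarith

/-! ### Integrability helpers -/

lemma integrable_bdd {α : Type*} [MeasurableSpace α] (μ : Measure α) [IsFiniteMeasure μ]
    {f : α → ℝ} (hf : AEStronglyMeasurable f μ) (c : ℝ) (hc : ∀ᵐ x ∂μ, |f x| ≤ c) :
    Integrable f μ :=
  Integrable.mono' (integrable_const c) hf (by simpa [Real.norm_eq_abs] using hc)

lemma integrable_prod_bdd (μ ν : Measure ℝ) [IsFiniteMeasure μ] [IsFiniteMeasure ν]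
    {A B : Set ℝ} (hA : MeasurableSet A) (hB : MeasurableSet B) {f : ℝ → ℝ → ℝ}
    (hm : Measurable (Function.uncurry f)) (c : ℝ)
    (hb : ∀ x ∈ A, ∀ y ∈ B, |f x y| ≤ c) :
    Integrable (Function.uncurry f) ((μ.restrict A).prod (ν.restrict B)) := by
  rw [Measure.prod_restrict]
  apply integrable_bdd _ hm.aestronglyMeasurable c
  refine (ae_restrict_iff' (hA.prod hB)).2 (ae_of_all _ fun p hp => ?_)
  exact hb p.1 hp.1 p.2 hp.2

lemma integrable_param (μ ν : Measure ℝ) [IsFiniteMeasure μ] [IsFiniteMeasure ν]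
    {A B : Set ℝ} (hA : MeasurableSet A) (hB : MeasurableSet B) {f : ℝ → ℝ → ℝ}
    (hm : Measurable (Function.uncurry f)) (c : ℝ)
    (hb : ∀ x ∈ A, ∀ y ∈ B, |f x y| ≤ c) :
    Integrable (fun x => ∫ y in B, f x y ∂ν) (μ.restrict A) := by
  apply Integrable.mono' (integrable_const (c * (ν B).toReal))
  · exact (hm.stronglyMeasurable.integral_prod_right').aestronglyMeasurable
  · refine (ae_restrict_iff' hA).2 (ae_of_all _ fun x hx => ?_)
    calc ‖∫ y in B, f x y ∂ν‖ ≤ c * ((ν.restrict B) univ).toReal := by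
          apply norm_integral_le_of_norm_le_const
          refine (ae_restrict_iff' hB).2 (ae_of_all _ fun y hy => ?_)
          rw [Real.norm_eq_abs]
          exact hb x hx y hy
      _ = c * (ν B).toReal := by rw [Measure.restrict_apply_univ]

/-! ### The reduction lemma -/

lemma red (νy : Measure (ℝ × Bool)) [IsProbabilityMeasure νy] {t : ℝ}
    (h0y : H1m νy (Iic 0) = 0) (h : ℝ → ℝ) (hm : Measurable h) :
    ∫ q : ℝ × Bool, (if q.1 ≤ t ∧ q.2 = true then 1 else 0) * h q.1 ∂νy
      = ∫ s in Ioc 0 t, h s ∂(H1m νy) := by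
  have hind : (fun q : ℝ × Bool => (if q.1 ≤ t ∧ q.2 = true then 1 else 0) * h q.1)
      = fun q => Set.indicator (Iic t ×ˢ ({true} : Set Bool)) (fun q : ℝ × Bool => h q.1) q := by
    funext q
    simp only [Set.indicator_apply, Set.mem_prod, Set.mem_Iic, Set.mem_singleton_iff]
    by_cases hq : q.1 ≤ t ∧ q.2 = true
    · simp [hq]
    · simp [hq]
  rw [hind, integral_indicator (measurableSet_Iic.prod (measurableSet_singleton true))]
  have hset : Iic t ×ˢ ({true} : Set Bool)
      = (Prod.fst ⁻¹' Iic t) ∩ {q : ℝ × Bool | q.2 = true} := by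
    ext ⟨s, d⟩
    simp only [Set.mem_prod, Set.mem_Iic, Set.mem_singleton_iff, Set.mem_inter_iff,
      Set.mem_preimage, Set.mem_setOf_eq]
  rw [hset, ← Measure.restrict_restrict (measurable_fst measurableSet_Iic)]
  rw [← setIntegral_map measurableSet_Iic hm.aestronglyMeasurable measurable_fst.aemeasurable]
  rw [show Measure.map Prod.fst (νy.restrict {q : ℝ × Bool | q.2 = true}) = H1m νy from rfl]
  apply setIntegral_congr_set
  rw [MeasureTheory.ae_eq_set]
  constructor
  · refine measure_mono_null ?_ h0y
    intro x hx
    simp only [mem_diff, mem_Iic, mem_Ioc, not_and_or, not_lt] at hx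
    rcases hx.2 with h' | h'
    · exact h'
    · exact absurd hx.1 h'
  · refine measure_mono_null ?_ (measure_empty (μ := H1m νy))
    intro x hx
    exact absurd hx.1.2 (by simpa using hx.2)

/-! ### Properties of `phi`, `kk`, `gg`, `ff` -/

section Bounds

variable (νx : Measure (ℝ × Bool)) {t θ' : ℝ}

lemma phi_meas (hHxc : Continuous (Hd νx)) : Measurable (phi νx) := by
  unfold phi
  simp only [one_div]
  exact (((continuous_const.sub hHxc).pow 2).measurable).inv

lemma phi_nonneg (u : ℝ) : 0 ≤ phi νx u := by unfold phi; positivity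

lemma phi_le (hθ' : 0 < θ') (hbdd : ∀ s ≤ t, θ' ≤ 1 - Hd νx s) {u : ℝ} (hu : u ≤ t) :
    phi νx u ≤ 1 / θ' ^ 2 := by
  unfold phi
  have h1 : θ' ^ 2 ≤ (1 - Hd νx u) ^ 2 := by
    apply pow_le_pow_left₀ hθ'.le (hbdd u hu)
  exact one_div_le_one_div_of_le (by positivity) h1

lemma kk_meas (hHxc : Continuous (Hd νx)) :
    Measurable (Function.uncurry (kk νx)) := by
  unfold kk Function.uncurry
  exact ((Measurable.ite (measurableSet_le measurable_fst measurable_snd)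
    measurable_const measurable_const)).mul ((phi_meas νx hHxc).comp measurable_fst)

lemma kk_abs_le (u s : ℝ) : |kk νx u s| ≤ phi νx u := by
  unfold kk
  by_cases h : u ≤ s
  · simp [h, abs_of_nonneg (phi_nonneg νx u)]
  · simp [h, phi_nonneg νx u]

lemma gg_eq (s : ℝ) : gg νx t s = ∫ u in Ioc 0 t, kk νx u s ∂(H1m νx) := by
  unfold gg kk phi
  exact integral_congr_ae (ae_of_all _ fun u => div_eq_mul_one_div _ _)

variable [IsProbabilityMeasure νx]

lemma kk_integrable (hθ' : 0 < θ') (hbdd : ∀ s ≤ t, θ' ≤ 1 - Hd νx s)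
    (hHxc : Continuous (Hd νx)) (s : ℝ) :
    Integrable (fun u => kk νx u s) ((H1m νx).restrict (Ioc 0 t)) := by
  apply integrable_bdd _ ?_ (1 / θ' ^ 2)
  · refine (ae_restrict_iff' measurableSet_Ioc).2 (ae_of_all _ fun u hu => ?_)
    exact (kk_abs_le νx u s).trans (phi_le νx hθ' hbdd hu.2)
  · exact ((kk_meas νx hHxc).comp (measurable_id.prodMk measurable_const)).aestronglyMeasurable

lemma gg_nonneg (s : ℝ) : 0 ≤ gg νx t s := by
  rw [gg_eq]
  apply integral_nonneg
  intro u
  unfold kk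
  by_cases h : u ≤ s <;> simp [h, phi_nonneg νx u]

lemma gg_le (hθ' : 0 < θ') (hbdd : ∀ s ≤ t, θ' ≤ 1 - Hd νx s) (hHxc : Continuous (Hd νx))
    (s : ℝ) : gg νx t s ≤ 1 / θ' ^ 2 * ((H1m νx) (Ioc 0 t)).toReal := by
  rw [gg_eq]
  calc ∫ u in Ioc 0 t, kk νx u s ∂(H1m νx)
      ≤ ∫ _u in Ioc 0 t, 1 / θ' ^ 2 ∂(H1m νx) := by
        apply integral_mono_ae (kk_integrable νx hθ' hbdd hHxc s) (integrable_const _)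
        refine (ae_restrict_iff' measurableSet_Ioc).2 (ae_of_all _ fun u hu => ?_)
        exact (le_abs_self _).trans ((kk_abs_le νx u s).trans (phi_le νx hθ' hbdd hu.2))
    _ = 1 / θ' ^ 2 * ((H1m νx) (Ioc 0 t)).toReal := by
        rw [setIntegral_const, smul_eq_mul, mul_comm]; rfl

lemma gg_mono (hθ' : 0 < θ') (hbdd : ∀ s ≤ t, θ' ≤ 1 - Hd νx s) (hHxc : Continuous (Hd νx)) :
    Monotone (gg νx t) := by
  intro s s' hss
  rw [gg_eq, gg_eq]
  apply integral_mono (kk_integrable νx hθ' hbdd hHxc s) (kk_integrable νx hθ' hbdd hHxc s')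
  intro u
  unfold kk
  by_cases h : u ≤ s
  · simp [h, h.trans hss]
  · by_cases h' : u ≤ s' <;> simp [h, h', phi_nonneg νx u]

lemma gg_meas (hθ' : 0 < θ') (hbdd : ∀ s ≤ t, θ' ≤ 1 - Hd νx s) (hHxc : Continuous (Hd νx)) :
    Measurable (gg νx t) :=
  (gg_mono νx hθ' hbdd hHxc).measurable

lemma gg_abs_le (hθ' : 0 < θ') (hbdd : ∀ s ≤ t, θ' ≤ 1 - Hd νx s) (hHxc : Continuous (Hd νx))
    (s : ℝ) : |gg νx t s| ≤ 1 / θ' ^ 2 * ((H1m νx) (Ioc 0 t)).toReal := by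
  rw [abs_of_nonneg (gg_nonneg νx s)]
  exact gg_le νx hθ' hbdd hHxc s

lemma ff_meas (hHxc : Continuous (Hd νx)) : Measurable (ff νx t) := by
  unfold ff
  apply Measurable.div
  · apply Measurable.ite ?_ measurable_const measurable_const
    have : {q : ℝ × Bool | q.1 ≤ t ∧ q.2 = true}
        = (Prod.fst ⁻¹' Iic t) ∩ (Prod.snd ⁻¹' {true}) := by
      ext q; simp
    rw [this]
    exact (measurable_fst measurableSet_Iic).inter (measurable_snd (measurableSet_singleton _))
  · exact (continuous_const.sub hHxc).measurable.comp measurable_fst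

lemma ff_abs_le (hθ' : 0 < θ') (hbdd : ∀ s ≤ t, θ' ≤ 1 - Hd νx s) (q : ℝ × Bool) :
    |ff νx t q| ≤ 1 / θ' := by
  unfold ff
  by_cases hq : q.1 ≤ t ∧ q.2 = true
  · simp only [hq, and_self, if_true]
    have h1 : θ' ≤ 1 - Hd νx q.1 := hbdd q.1 hq.1
    have h2 : 0 < 1 - Hd νx q.1 := lt_of_lt_of_le hθ' h1
    rw [abs_of_nonneg (le_of_lt (div_pos one_pos h2))]
    exact one_div_le_one_div_of_le hθ' h1
  · simp [hq]
    positivity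

end Bounds

/-! ### Step A -/

lemma stepA (νx νy : Measure (ℝ × Bool)) [IsProbabilityMeasure νy] {t : ℝ}
    (hHxc : Continuous (Hd νx)) (h0y : H1m νy (Iic 0) = 0) :
    ∫ q, (ff νx t q) ^ 2 ∂νy = ∫ v in Ioc 0 t, 1 / (1 - Hd νx v) ^ 2 ∂(H1m νy) := by
  have h1 : (fun q : ℝ × Bool => (ff νx t q) ^ 2)
      = fun q => (if q.1 ≤ t ∧ q.2 = true then 1 else 0) * phi νx q.1 := by
    funext q
    unfold ff phi
    by_cases hq : q.1 ≤ t ∧ q.2 = true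
    · simp [hq, div_pow]
    · simp [hq]
  rw [h1, red νy h0y (phi νx) (phi_meas νx hHxc)]
  rfl

/-! ### Step C -/

lemma stepC (νx νy : Measure (ℝ × Bool)) [IsProbabilityMeasure νx] [IsProbabilityMeasure νy]
    {t θ' : ℝ} (hθ' : 0 < θ') (hbdd : ∀ s ≤ t, θ' ≤ 1 - Hd νx s)
    (hHxc : Continuous (Hd νx)) (h0y : H1m νy (Iic 0) = 0) :
    ∫ q, ff νx t q * gg νx t q.1 ∂νy
      = ∫ u in Ioc 0 t, (1 / (1 - Hd νx u) ^ 2) *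
          (∫ v in Icc u t, (1 - Hd νx v)⁻¹ ∂(H1m νy)) ∂(H1m νx) := by
  have hψmeas : Measurable fun s => (1 - Hd νx s)⁻¹ := (continuous_const.sub hHxc).measurable.inv
  have hψabs : ∀ s ≤ t, |(1 - Hd νx s)⁻¹| ≤ 1 / θ' := by
    intro s hs
    have h1 := hbdd s hs
    have h2 : 0 < 1 - Hd νx s := lt_of_lt_of_le hθ' h1
    rw [abs_of_nonneg (inv_nonneg.2 h2.le), ← one_div]
    exact one_div_le_one_div_of_le hθ' h1
  have h1 : (fun q : ℝ × Bool => ff νx t q * gg νx t q.1)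
      = fun q => (if q.1 ≤ t ∧ q.2 = true then 1 else 0) *
        ((1 - Hd νx q.1)⁻¹ * gg νx t q.1) := by
    funext q; unfold ff; rw [div_eq_mul_inv]; ring
  rw [h1, red νy h0y (fun s => (1 - Hd νx s)⁻¹ * gg νx t s) (hψmeas.mul (gg_meas νx hθ' hbdd hHxc))]
  have h2 : ∀ s, (1 - Hd νx s)⁻¹ * gg νx t s
      = ∫ u in Ioc 0 t, (1 - Hd νx s)⁻¹ * kk νx u s ∂(H1m νx) := by
    intro s
    rw [integral_const_mul, ← gg_eq]
  rw [setIntegral_congr_fun measurableSet_Ioc (fun s _ => h2 s)]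
  have hswap : Integrable (Function.uncurry fun s u => (1 - Hd νx s)⁻¹ * kk νx u s)
      (((H1m νy).restrict (Ioc 0 t)).prod ((H1m νx).restrict (Ioc 0 t))) := by
    apply integrable_prod_bdd _ _ measurableSet_Ioc measurableSet_Ioc ?_ ((1 / θ') * (1 / θ' ^ 2))
    · intro s hs u hu
      rw [abs_mul]
      exact mul_le_mul (hψabs s hs.2) ((kk_abs_le νx u s).trans (phi_le νx hθ' hbdd hu.2))
        (abs_nonneg _) (by positivity)
    · exact (hψmeas.comp measurable_fst).mul
        ((kk_meas νx hHxc).comp (measurable_snd.prodMk measurable_fst))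
  rw [integral_integral_swap hswap]
  apply setIntegral_congr_fun measurableSet_Ioc
  intro u hu
  show ∫ s in Ioc 0 t, (1 - Hd νx s)⁻¹ * kk νx u s ∂H1m νy
    = 1 / (1 - Hd νx u) ^ 2 * ∫ v in Icc u t, (1 - Hd νx v)⁻¹ ∂H1m νy
  have h3 : ∀ s, (1 - Hd νx s)⁻¹ * kk νx u s
      = (Ici u).indicator (fun s => (1 - Hd νx s)⁻¹ * phi νx u) s := by
    intro s
    unfold kk
    by_cases h : u ≤ s
    · simp [Set.indicator_apply, Set.mem_Ici, h]
    · simp [Set.indicator_apply, Set.mem_Ici, h]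
  rw [setIntegral_congr_fun measurableSet_Ioc (fun s _ => h3 s),
    setIntegral_indicator measurableSet_Ici]
  have hset : Ioc 0 t ∩ Ici u = Icc u t := by
    ext x
    simp only [mem_inter_iff, mem_Ioc, mem_Ici, mem_Icc]
    constructor
    · rintro ⟨⟨_, hxt⟩, hux⟩; exact ⟨hux, hxt⟩
    · rintro ⟨hux, hxt⟩; exact ⟨⟨lt_of_lt_of_le hu.1 hux, hxt⟩, hux⟩
  rw [hset, integral_mul_const, mul_comm]
  rfl

/-! ### Step B -/

lemma stepB (νx νy : Measure (ℝ × Bool)) [IsProbabilityMeasure νx] [IsProbabilityMeasure νy]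
    {t θ' : ℝ} (hθ' : 0 < θ') (hbdd : ∀ s ≤ t, θ' ≤ 1 - Hd νx s)
    (hHxc : Continuous (Hd νx)) (hHyc : Continuous (Hd νy)) (hH1xc : Continuous (H1d νx)) :
    ∫ q, (gg νx t q.1) ^ 2 ∂νy
      = 2 * ∫ v in Ioc 0 t, (1 / (1 - Hd νx v) ^ 2) *
          (∫ w in Icc v t, (1 - Hd νy w) / (1 - Hd νx w) ^ 2 ∂(H1m νx)) ∂(H1m νx) := by
  have hkm := kk_meas νx hHxc
  have hgm := gg_meas νx hθ' hbdd hHxc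
  have hpm := phi_meas νx hHxc
  have hMg := gg_abs_le νx hθ' hbdd hHxc
  have hFm : Measurable fun p : ℝ × ℝ =>
      (1 - Hd νy (max p.1 p.2)) * (phi νx p.1 * phi νx p.2) :=
    ((continuous_const.sub (hHyc.comp (continuous_fst.max continuous_snd))).measurable).mul
      ((hpm.comp measurable_fst).mul (hpm.comp measurable_snd))
  have hHy01 : ∀ v : ℝ, |1 - Hd νy v| ≤ 1 := by
    intro v
    rw [abs_le]
    constructor
    · linarith [Hd_le_one νy v]
    · linarith [Hd_nonneg νy v]
  have hFb : ∀ u ∈ Ioc 0 t, ∀ w ∈ Ioc 0 t,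
      |(1 - Hd νy (max u w)) * (phi νx u * phi νx w)| ≤ 1 / θ' ^ 2 * (1 / θ' ^ 2) := by
    intro u hu w hw
    rw [abs_mul, abs_mul]
    calc |1 - Hd νy (max u w)| * (|phi νx u| * |phi νx w|)
        ≤ 1 * (1 / θ' ^ 2 * (1 / θ' ^ 2)) := by
          apply mul_le_mul (hHy01 _) ?_ (by positivity) one_pos.le
          apply mul_le_mul ?_ ?_ (abs_nonneg _) (by positivity)
          · rw [abs_of_nonneg (phi_nonneg νx u)]; exact phi_le νx hθ' hbdd hu.2
          · rw [abs_of_nonneg (phi_nonneg νx w)]; exact phi_le νx hθ' hbdd hw.2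
      _ = 1 / θ' ^ 2 * (1 / θ' ^ 2) := one_mul _
  have e1 : ∀ s, gg νx t s ^ 2 = ∫ u in Ioc 0 t, kk νx u s * gg νx t s ∂(H1m νx) := by
    intro s; rw [integral_mul_const, ← gg_eq, sq]
  have e2 : ∀ (u s : ℝ), kk νx u s * gg νx t s
      = ∫ w in Ioc 0 t, kk νx u s * kk νx w s ∂(H1m νx) := by
    intro u s; rw [integral_const_mul, ← gg_eq]
  have e3 : ∀ u w : ℝ, (∫ s, kk νx u s * kk νx w s ∂(Measure.map Prod.fst νy))
      = (1 - Hd νy (max u w)) * (phi νx u * phi νx w) := by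
    intro u w
    have h : (fun s => kk νx u s * kk νx w s)
        = fun s => (Ici (max u w)).indicator (fun _ => phi νx u * phi νx w) s := by
      funext s
      unfold kk
      by_cases h1 : u ≤ s <;> by_cases h2 : w ≤ s <;>
        simp [Set.indicator_apply, Set.mem_Ici, max_le_iff, h1, h2]
    rw [h, integral_indicator measurableSet_Ici, setIntegral_const, measureReal_def,
      map_fst_Ici νy hHyc, smul_eq_mul]
  have hI1 : Integrable (Function.uncurry fun s u => kk νx u s * gg νx t s)
      ((Measure.map Prod.fst νy).prod ((H1m νx).restrict (Ioc 0 t))) := by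
    have hprob : IsProbabilityMeasure (Measure.map (Prod.fst : ℝ × Bool → ℝ) νy) :=
      Measure.isProbabilityMeasure_map measurable_fst.aemeasurable
    have := integrable_prod_bdd (Measure.map Prod.fst νy) (H1m νx)
      (A := univ) (B := Ioc (0:ℝ) t) MeasurableSet.univ measurableSet_Ioc
      (f := fun s u => kk νx u s * gg νx t s)
      ((hkm.comp (measurable_snd.prodMk measurable_fst)).mul (hgm.comp measurable_fst))
      (1 / θ' ^ 2 * (1 / θ' ^ 2 * ((H1m νx) (Ioc 0 t)).toReal))
      (by
        intro x _ u hu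
        rw [abs_mul]
        apply mul_le_mul ((kk_abs_le νx u x).trans (phi_le νx hθ' hbdd hu.2)) (hMg x)
          (abs_nonneg _) (by positivity))
    rwa [Measure.restrict_univ] at this
  have hI2 : ∀ u ∈ Ioc 0 t, Integrable (Function.uncurry fun s w => kk νx u s * kk νx w s)
      ((Measure.map Prod.fst νy).prod ((H1m νx).restrict (Ioc 0 t))) := by
    intro u hu
    have hprob : IsProbabilityMeasure (Measure.map (Prod.fst : ℝ × Bool → ℝ) νy) :=
      Measure.isProbabilityMeasure_map measurable_fst.aemeasurable
    have := integrable_prod_bdd (Measure.map Prod.fst νy) (H1m νx)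
      (A := univ) (B := Ioc (0:ℝ) t) MeasurableSet.univ measurableSet_Ioc
      (f := fun s w => kk νx u s * kk νx w s)
      ((hkm.comp (measurable_const.prodMk measurable_fst)).mul
        (hkm.comp (measurable_snd.prodMk measurable_fst)))
      (1 / θ' ^ 2 * (1 / θ' ^ 2))
      (by
        intro x _ w hw
        rw [abs_mul]
        apply mul_le_mul ((kk_abs_le νx u x).trans (phi_le νx hθ' hbdd hu.2))
          ((kk_abs_le νx w x).trans (phi_le νx hθ' hbdd hw.2)) (abs_nonneg _) (by positivity))
    rwa [Measure.restrict_univ] at this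
  have main1 : ∫ q, (gg νx t q.1) ^ 2 ∂νy
      = ∫ u in Ioc 0 t, ∫ w in Ioc 0 t,
          (1 - Hd νy (max u w)) * (phi νx u * phi νx w) ∂(H1m νx) ∂(H1m νx) := by
    calc ∫ q, (gg νx t q.1) ^ 2 ∂νy
        = ∫ s, gg νx t s ^ 2 ∂(Measure.map Prod.fst νy) :=
          (integral_map measurable_fst.aemeasurable
            ((hgm.pow_const 2).aestronglyMeasurable)).symm
      _ = ∫ s, ∫ u in Ioc 0 t, kk νx u s * gg νx t s ∂(H1m νx)
            ∂(Measure.map Prod.fst νy) := by simp only [e1]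
      _ = ∫ u in Ioc 0 t, ∫ s, kk νx u s * gg νx t s ∂(Measure.map Prod.fst νy)
            ∂(H1m νx) := integral_integral_swap hI1
      _ = ∫ u in Ioc 0 t, ∫ s, (∫ w in Ioc 0 t, kk νx u s * kk νx w s ∂(H1m νx))
            ∂(Measure.map Prod.fst νy) ∂(H1m νx) := by simp only [e2]
      _ = ∫ u in Ioc 0 t, ∫ w in Ioc 0 t,
            (∫ s, kk νx u s * kk νx w s ∂(Measure.map Prod.fst νy)) ∂(H1m νx) ∂(H1m νx) := by
          apply setIntegral_congr_fun measurableSet_Ioc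
          intro u hu
          exact integral_integral_swap (hI2 u hu)
      _ = ∫ u in Ioc 0 t, ∫ w in Ioc 0 t,
            (1 - Hd νy (max u w)) * (phi νx u * phi νx w) ∂(H1m νx) ∂(H1m νx) := by
          simp only [e3]
  -- generic integrability of cut versions of F
  have hcut : ∀ e : ℝ → ℝ → ℝ, Measurable (Function.uncurry e) → (∀ a b, |e a b| ≤ 1) →
      (∀ u ∈ Ioc (0:ℝ) t, Integrable (fun w => e u w *
        ((1 - Hd νy (max u w)) * (phi νx u * phi νx w))) ((H1m νx).restrict (Ioc 0 t)))
      ∧ Integrable (fun u => ∫ w in Ioc 0 t, e u w *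
        ((1 - Hd νy (max u w)) * (phi νx u * phi νx w)) ∂(H1m νx))
          ((H1m νx).restrict (Ioc 0 t)) := by
    intro e hem heb
    constructor
    · intro u hu
      refine integrable_bdd _ ?_ (1 / θ' ^ 2 * (1 / θ' ^ 2)) ?_
      · exact ((hem.comp (measurable_const.prodMk measurable_id)).mul
          (hFm.comp (measurable_const.prodMk measurable_id))).aestronglyMeasurable
      · refine (ae_restrict_iff' measurableSet_Ioc).2 (ae_of_all _ fun w hw => ?_)
        rw [abs_mul]
        calc |e u w| * |(1 - Hd νy (max u w)) * (phi νx u * phi νx w)|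
            ≤ 1 * (1 / θ' ^ 2 * (1 / θ' ^ 2)) :=
              mul_le_mul (heb u w) (hFb u hu w hw) (abs_nonneg _) one_pos.le
          _ = _ := one_mul _
    · refine integrable_param (H1m νx) (H1m νx) measurableSet_Ioc measurableSet_Ioc
        (f := fun u w => e u w * ((1 - Hd νy (max u w)) * (phi νx u * phi νx w)))
        ?_ (1 / θ' ^ 2 * (1 / θ' ^ 2)) ?_
      · exact hem.mul hFm
      intro u hu w hw
      rw [abs_mul]
      calc |e u w| * |(1 - Hd νy (max u w)) * (phi νx u * phi νx w)|
          ≤ 1 * (1 / θ' ^ 2 * (1 / θ' ^ 2)) :=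
            mul_le_mul (heb u w) (hFb u hu w hw) (abs_nonneg _) one_pos.le
        _ = _ := one_mul _
  have hble : ∀ (c : Prop) (h : Decidable c), |(if c then (1:ℝ) else 0)| ≤ 1 := by
    intro c h
    split_ifs <;> simp
  -- the four instantiations
  have hle : (∀ u ∈ Ioc (0:ℝ) t, Integrable (fun w => (if u ≤ w then 1 else 0) *
        ((1 - Hd νy (max u w)) * (phi νx u * phi νx w))) ((H1m νx).restrict (Ioc 0 t)))
      ∧ Integrable (fun u => ∫ w in Ioc 0 t, (if u ≤ w then 1 else 0) *
        ((1 - Hd νy (max u w)) * (phi νx u * phi νx w)) ∂(H1m νx))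
          ((H1m νx).restrict (Ioc 0 t)) :=
    hcut _ (Measurable.ite (measurableSet_le measurable_fst measurable_snd)
      measurable_const measurable_const) (fun a b => hble _ _)
  have hgt : (∀ u ∈ Ioc (0:ℝ) t, Integrable (fun w => (if w < u then 1 else 0) *
        ((1 - Hd νy (max u w)) * (phi νx u * phi νx w))) ((H1m νx).restrict (Ioc 0 t)))
      ∧ Integrable (fun u => ∫ w in Ioc 0 t, (if w < u then 1 else 0) *
        ((1 - Hd νy (max u w)) * (phi νx u * phi νx w)) ∂(H1m νx))
          ((H1m νx).restrict (Ioc 0 t)) :=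
    hcut _ (Measurable.ite (measurableSet_lt measurable_snd measurable_fst)
      measurable_const measurable_const) (fun a b => hble _ _)
  have hlt2 : (∀ u ∈ Ioc (0:ℝ) t, Integrable (fun w => (if u < w then 1 else 0) *
        ((1 - Hd νy (max u w)) * (phi νx u * phi νx w))) ((H1m νx).restrict (Ioc 0 t)))
      ∧ Integrable (fun u => ∫ w in Ioc 0 t, (if u < w then 1 else 0) *
        ((1 - Hd νy (max u w)) * (phi νx u * phi νx w)) ∂(H1m νx))
          ((H1m νx).restrict (Ioc 0 t)) :=
    hcut _ (Measurable.ite (measurableSet_lt measurable_fst measurable_snd)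
      measurable_const measurable_const) (fun a b => hble _ _)
  have heq : (∀ u ∈ Ioc (0:ℝ) t, Integrable (fun w => (if w = u then 1 else 0) *
        ((1 - Hd νy (max u w)) * (phi νx u * phi νx w))) ((H1m νx).restrict (Ioc 0 t)))
      ∧ Integrable (fun u => ∫ w in Ioc 0 t, (if w = u then 1 else 0) *
        ((1 - Hd νy (max u w)) * (phi νx u * phi νx w)) ∂(H1m νx))
          ((H1m νx).restrict (Ioc 0 t)) :=
    hcut _ (Measurable.ite (measurableSet_eq_fun measurable_snd measurable_fst)
      measurable_const measurable_const) (fun a b => hble _ _)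
  have hsplit : ∫ u in Ioc 0 t, ∫ w in Ioc 0 t,
        (1 - Hd νy (max u w)) * (phi νx u * phi νx w) ∂(H1m νx) ∂(H1m νx)
      = (∫ u in Ioc 0 t, ∫ w in Ioc 0 t, (if u ≤ w then 1 else 0) *
          ((1 - Hd νy (max u w)) * (phi νx u * phi νx w)) ∂(H1m νx) ∂(H1m νx))
        + ∫ u in Ioc 0 t, ∫ w in Ioc 0 t, (if w < u then 1 else 0) *
          ((1 - Hd νy (max u w)) * (phi νx u * phi νx w)) ∂(H1m νx) ∂(H1m νx) := by
    rw [← integral_add hle.2 hgt.2]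
    apply setIntegral_congr_fun measurableSet_Ioc
    intro u hu
    show (∫ w in Ioc 0 t, (1 - Hd νy (max u w)) * (phi νx u * phi νx w) ∂(H1m νx))
      = (∫ w in Ioc 0 t, (if u ≤ w then 1 else 0) *
          ((1 - Hd νy (max u w)) * (phi νx u * phi νx w)) ∂(H1m νx))
        + ∫ w in Ioc 0 t, (if w < u then 1 else 0) *
          ((1 - Hd νy (max u w)) * (phi νx u * phi νx w)) ∂(H1m νx)
    rw [← integral_add (hle.1 u hu) (hgt.1 u hu)]
    apply setIntegral_congr_fun measurableSet_Ioc
    intro w _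
    by_cases h : u ≤ w
    · simp [h, not_lt.2 h]
    · simp [h, not_le.1 h]
  have hswap2 : Integrable (Function.uncurry fun u w => (if w < u then 1 else 0) *
      ((1 - Hd νy (max u w)) * (phi νx u * phi νx w)))
      (((H1m νx).restrict (Ioc 0 t)).prod ((H1m νx).restrict (Ioc 0 t))) := by
    refine integrable_prod_bdd (H1m νx) (H1m νx) (A := Ioc (0:ℝ) t) (B := Ioc (0:ℝ) t)
      measurableSet_Ioc measurableSet_Ioc
      (f := fun u w => (if w < u then 1 else 0) *
        ((1 - Hd νy (max u w)) * (phi νx u * phi νx w)))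
      ?_ (1 / θ' ^ 2 * (1 / θ' ^ 2)) ?_
    · exact (Measurable.ite (measurableSet_lt measurable_snd measurable_fst)
        measurable_const measurable_const).mul hFm
    intro u hu w hw
    rw [abs_mul]
    calc |if w < u then (1:ℝ) else 0| * |(1 - Hd νy (max u w)) * (phi νx u * phi νx w)|
        ≤ 1 * (1 / θ' ^ 2 * (1 / θ' ^ 2)) :=
          mul_le_mul (hble _ _) (hFb u hu w hw) (abs_nonneg _) one_pos.le
      _ = _ := one_mul _
  have hlt : ∫ u in Ioc 0 t, ∫ w in Ioc 0 t, (if w < u then 1 else 0) *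
        ((1 - Hd νy (max u w)) * (phi νx u * phi νx w)) ∂(H1m νx) ∂(H1m νx)
      = ∫ u in Ioc 0 t, ∫ w in Ioc 0 t, (if u < w then 1 else 0) *
        ((1 - Hd νy (max u w)) * (phi νx u * phi νx w)) ∂(H1m νx) ∂(H1m νx) := by
    rw [integral_integral_swap hswap2]
    apply setIntegral_congr_fun measurableSet_Ioc
    intro u _
    apply setIntegral_congr_fun measurableSet_Ioc
    intro w _
    show (if u < w then 1 else 0) * ((1 - Hd νy (max w u)) * (phi νx w * phi νx u)) = _
    rw [max_comm]
    ring
  have hdiag : ∫ u in Ioc 0 t, ∫ w in Ioc 0 t, (if w = u then 1 else 0) *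
        ((1 - Hd νy (max u w)) * (phi νx u * phi νx w)) ∂(H1m νx) ∂(H1m νx) = 0 := by
    have hz : ∀ u : ℝ, ∫ w in Ioc 0 t, (if w = u then 1 else 0) *
        ((1 - Hd νy (max u w)) * (phi νx u * phi νx w)) ∂(H1m νx) = 0 := by
      intro u
      have hind : (fun w => (if w = u then 1 else 0) *
          ((1 - Hd νy (max u w)) * (phi νx u * phi νx w)))
          = fun w => ({u} : Set ℝ).indicator
              (fun w => (1 - Hd νy (max u w)) * (phi νx u * phi νx w)) w := by
        funext w
        by_cases h : w = u <;> simp [Set.indicator_apply, h]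
      rw [hind, integral_indicator (measurableSet_singleton u),
        Measure.restrict_restrict (measurableSet_singleton u)]
      have : (H1m νx) ({u} ∩ Ioc 0 t) = 0 :=
        measure_mono_null inter_subset_left (H1m_sing νx hH1xc u)
      rw [Measure.restrict_eq_zero.2 this, integral_zero_measure]
    calc ∫ u in Ioc 0 t, ∫ w in Ioc 0 t, (if w = u then 1 else 0) *
          ((1 - Hd νy (max u w)) * (phi νx u * phi νx w)) ∂(H1m νx) ∂(H1m νx)
        = ∫ _u in Ioc 0 t, (0:ℝ) ∂(H1m νx) := by
          apply setIntegral_congr_fun measurableSet_Ioc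
          intro u _
          exact hz u
      _ = 0 := by simp
  have hsplit2 : ∫ u in Ioc 0 t, ∫ w in Ioc 0 t, (if u ≤ w then 1 else 0) *
        ((1 - Hd νy (max u w)) * (phi νx u * phi νx w)) ∂(H1m νx) ∂(H1m νx)
      = (∫ u in Ioc 0 t, ∫ w in Ioc 0 t, (if u < w then 1 else 0) *
          ((1 - Hd νy (max u w)) * (phi νx u * phi νx w)) ∂(H1m νx) ∂(H1m νx))
        + ∫ u in Ioc 0 t, ∫ w in Ioc 0 t, (if w = u then 1 else 0) *
          ((1 - Hd νy (max u w)) * (phi νx u * phi νx w)) ∂(H1m νx) ∂(H1m νx) := by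
    rw [← integral_add hlt2.2 heq.2]
    apply setIntegral_congr_fun measurableSet_Ioc
    intro u hu
    show (∫ w in Ioc 0 t, (if u ≤ w then 1 else 0) *
        ((1 - Hd νy (max u w)) * (phi νx u * phi νx w)) ∂(H1m νx))
      = (∫ w in Ioc 0 t, (if u < w then 1 else 0) *
          ((1 - Hd νy (max u w)) * (phi νx u * phi νx w)) ∂(H1m νx))
        + ∫ w in Ioc 0 t, (if w = u then 1 else 0) *
          ((1 - Hd νy (max u w)) * (phi νx u * phi νx w)) ∂(H1m νx)
    rw [← integral_add (hlt2.1 u hu) (heq.1 u hu)]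
    apply setIntegral_congr_fun measurableSet_Ioc
    intro w _
    rcases lt_trichotomy u w with h | h | h
    · simp [h.le, h, h.ne']
    · simp [h]
    · simp [not_le.2 h, not_lt.2 h.le, h.ne]
  have hT : ∫ u in Ioc 0 t, ∫ w in Ioc 0 t, (if u ≤ w then 1 else 0) *
        ((1 - Hd νy (max u w)) * (phi νx u * phi νx w)) ∂(H1m νx) ∂(H1m νx)
      = ∫ v in Ioc 0 t, (1 / (1 - Hd νx v) ^ 2) *
          (∫ w in Icc v t, (1 - Hd νy w) / (1 - Hd νx w) ^ 2 ∂(H1m νx)) ∂(H1m νx) := by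
    apply setIntegral_congr_fun measurableSet_Ioc
    intro u hu
    show (∫ w in Ioc 0 t, (if u ≤ w then 1 else 0) *
        ((1 - Hd νy (max u w)) * (phi νx u * phi νx w)) ∂(H1m νx))
      = 1 / (1 - Hd νx u) ^ 2 * ∫ w in Icc u t, (1 - Hd νy w) / (1 - Hd νx w) ^ 2 ∂(H1m νx)
    have hpt : ∀ w, (if u ≤ w then 1 else 0) *
        ((1 - Hd νy (max u w)) * (phi νx u * phi νx w))
        = (Ici u).indicator (fun w => phi νx u * ((1 - Hd νy w) * phi νx w)) w := by
      intro w
      by_cases h : u ≤ w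
      · simp only [Set.indicator_apply, Set.mem_Ici, h, if_true, max_eq_right h, one_mul]
        ring
      · simp [Set.indicator_apply, Set.mem_Ici, h]
    rw [setIntegral_congr_fun measurableSet_Ioc (fun w _ => hpt w),
      setIntegral_indicator measurableSet_Ici]
    have hset : Ioc 0 t ∩ Ici u = Icc u t := by
      ext x
      simp only [mem_inter_iff, mem_Ioc, mem_Ici, mem_Icc]
      constructor
      · rintro ⟨⟨_, hxt⟩, hux⟩; exact ⟨hux, hxt⟩
      · rintro ⟨hux, hxt⟩; exact ⟨⟨lt_of_lt_of_le hu.1 hux, hxt⟩, hux⟩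
    rw [hset, integral_const_mul]
    have hint : ∀ w, (1 - Hd νy w) * phi νx w = (1 - Hd νy w) / (1 - Hd νx w) ^ 2 := by
      intro w
      unfold phi
      rw [mul_one_div]
    rw [setIntegral_congr_fun measurableSet_Icc (fun w _ => hint w)]
    rfl
  linarith [main1, hsplit, hlt, hsplit2, hdiag, hT]

/-- proof of Lemma 2, general `y`: `∫ ξ_x(s,d,t)² dν_y(s,d) = A + B - 2C`. -/
theorem Phi1_general_decomposition (νx νy : Measure (ℝ × Bool))
    [IsProbabilityMeasure νx] [IsProbabilityMeasure νy]
    (hHxc : Continuous (Hd νx)) (hHyc : Continuous (Hd νy))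
    (hH1xc : Continuous (H1d νx)) (hH1yc : Continuous (H1d νy))
    (hsuppx : νx {q : ℝ × Bool | q.1 < 0} = 0)
    (hsuppy : νy {q : ℝ × Bool | q.1 < 0} = 0)
    (t : ℝ) (ht : 0 ≤ t)
    (θ : ℝ) (hθ : 0 < θ) (hθle : ∀ s ∈ Icc (0 : ℝ) t, θ ≤ 1 - Hd νx s)
    (A B C : ℝ)
    (hA : A = ∫ v in Ioc 0 t, 1 / (1 - Hd νx v) ^ 2 ∂(H1m νy))
    (hB : B = 2 * ∫ v in Ioc 0 t, (1 / (1 - Hd νx v) ^ 2) *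
        (∫ w in Icc v t, (1 - Hd νy w) / (1 - Hd νx w) ^ 2 ∂(H1m νx)) ∂(H1m νx))
    (hC : C = ∫ u in Ioc 0 t, (1 / (1 - Hd νx u) ^ 2) *
        (∫ v in Icc u t, (1 - Hd νx v)⁻¹ ∂(H1m νy)) ∂(H1m νx)) :
    (∫ q, (xi νx t q.1 q.2) ^ 2 ∂νy) = A + B - 2 * C := by
  -- preliminaries
  set θ' := min θ 1 with hθ'def
  have hθ' : 0 < θ' := lt_min hθ one_pos
  have hHd0 : ∀ s < (0:ℝ), Hd νx s = 0 := by
    intro s hs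
    rw [Hd]
    have : νx (Iic s ×ˢ (univ : Set Bool)) = 0 := by
      refine measure_mono_null ?_ hsuppx
      intro q hq
      exact lt_of_le_of_lt hq.1 hs
    rw [this]
    simp
  have hbdd : ∀ s ≤ t, θ' ≤ 1 - Hd νx s := by
    intro s hs
    by_cases h0 : 0 ≤ s
    · exact le_trans (min_le_left _ _) (hθle s ⟨h0, hs⟩)
    · push_neg at h0
      rw [hHd0 s h0]
      have := min_le_right θ 1
      rw [hθ'def]
      linarith
  have h0y : H1m νy (Iic 0) = 0 := H1m_Iic_zero νy hH1yc hsuppy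
  -- pointwise identity
  have hxi : (fun q : ℝ × Bool => (xi νx t q.1 q.2) ^ 2)
      = fun q => (ff νx t q) ^ 2 - 2 * (ff νx t q * gg νx t q.1) + (gg νx t q.1) ^ 2 := by
    funext q
    have : xi νx t q.1 q.2 = ff νx t q - gg νx t q.1 := rfl
    rw [this]; ring
  -- integrabilities
  have hMg : ∀ s, |gg νx t s| ≤ 1 / θ' ^ 2 * ((H1m νx) (Ioc 0 t)).toReal :=
    gg_abs_le νx hθ' hbdd hHxc
  have hff2_int : Integrable (fun q => (ff νx t q) ^ 2) νy := by
    apply integrable_bdd νy ((((ff_meas νx hHxc)).pow measurable_const).aestronglyMeasurable)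
      ((1/θ')^2)
    refine ae_of_all _ fun q => ?_
    rw [abs_pow]
    exact pow_le_pow_left₀ (abs_nonneg _) (ff_abs_le νx hθ' hbdd q) 2
  have hffgg_int : Integrable (fun q => ff νx t q * gg νx t q.1) νy := by
    apply integrable_bdd νy (((ff_meas νx hHxc).mul
      ((gg_meas νx hθ' hbdd hHxc).comp measurable_fst)).aestronglyMeasurable)
      ((1 / θ') * (1 / θ' ^ 2 * ((H1m νx) (Ioc 0 t)).toReal))
    refine ae_of_all _ fun q => ?_
    rw [Pi.mul_apply, Function.comp_apply, abs_mul]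
    exact mul_le_mul (ff_abs_le νx hθ' hbdd q) (hMg q.1) (abs_nonneg _) (by positivity)
  have hgg2_int : Integrable (fun q => (gg νx t q.1) ^ 2) νy := by
    apply integrable_bdd νy ((((gg_meas νx hθ' hbdd hHxc).comp measurable_fst).pow
      measurable_const).aestronglyMeasurable)
      ((1 / θ' ^ 2 * ((H1m νx) (Ioc 0 t)).toReal) ^ 2)
    refine ae_of_all _ fun q => ?_
    rw [abs_pow]
    exact pow_le_pow_left₀ (abs_nonneg _) (hMg q.1) 2
  have h2fg : Integrable (fun q : ℝ × Bool => 2 * (ff νx t q * gg νx t q.1)) νy :=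
    hffgg_int.const_mul 2
  have hsub : Integrable
      (fun q : ℝ × Bool => (ff νx t q) ^ 2 - 2 * (ff νx t q * gg νx t q.1)) νy :=
    hff2_int.sub h2fg
  rw [hxi, integral_add hsub hgg2_int,
    integral_sub hff2_int h2fg, integral_const_mul,
    stepA νx νy hHxc h0y, stepC νx νy hθ' hbdd hHxc h0y,
    stepB νx νy hθ' hbdd hHxc hHyc hH1xc, hA, hB, hC]
  ring

end Stmt6
end
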